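/- arXiv:1912.10989 — 2 statements merged into one kernel-verified Lean document; each statement's English description precedes it below -/
import Mathlib

section
/- Let G be a finite connected simple graph and W an edge clique cover of G. A graph H is a minimal triangulation of G if and only if (1) V(H) = V(G) and (2) there is a potential maximal clique Ω of G such that every connected component C_i of G \ Ω satisfies |W[C_i]| ≤ |W|/2, and E(H) equals the set of all pairs of vertices inside Ω together with the union of E(H_i) over the connected components C_i of G \ Ω, where each H_i is a minimal triangulation of the realization R(C_i). -/
open scoped Classical

namespace PaperECC

variable {V : Type*}

/-- `nbhd G X` is N(X): vertices outside `X` with a neighbor in `X`. -/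
def nbhd (G : SimpleGraph V) (X : Set V) : Set V :=
  {v | v ∉ X ∧ ∃ u ∈ X, G.Adj u v}

/-- `closedNbhd G X` is N[X] = X ∪ N(X). -/
def closedNbhd (G : SimpleGraph V) (X : Set V) : Set V :=
  X ∪ nbhd G X

/-- closed neighborhood N[v] of a single vertex. -/
def vNbhd (G : SimpleGraph V) (v : V) : Set V :=
  insert v (G.neighborSet v)

/-- `IsCompOf G X C`: `C` is the vertex set of a connected component of `G \ X`. -/
def IsCompOf (G : SimpleGraph V) (X C : Set V) : Prop :=
  C.Nonempty ∧ Disjoint C X ∧ (G.induce C).Connected ∧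
    ∀ u ∈ C, ∀ v, v ∉ X → G.Adj u v → v ∈ C

/-- `C` is a full component of `X`: a component of `G \ X` with N(C) = X. -/
def IsFullCompOf (G : SimpleGraph V) (X C : Set V) : Prop :=
  IsCompOf G X C ∧ nbhd G C = X

/-- `S` is a minimal separator of `G`: it has at least two full components. -/
def IsMinSep (G : SimpleGraph V) (S : Set V) : Prop :=
  ∃ C D : Set V, C ≠ D ∧ IsFullCompOf G S C ∧ IsFullCompOf G S D

/-- `C` is a block of `G`: a component of `G \ N(C)` whose neighborhood is a minimal separator. -/
def IsBlock (G : SimpleGraph V) (C : Set V) : Prop :=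
  IsCompOf G (nbhd G C) C ∧ IsMinSep G (nbhd G C)

/-- `H` is chordal: every (injectively embedded) cycle on at least 4 vertices has a chord,
i.e. there is no induced cycle on four or more vertices. -/
def IsChordal (H : SimpleGraph V) : Prop :=
  ∀ n : ℕ, 4 ≤ n → ∀ f : ZMod n → V, Function.Injective f →
    (∀ i, H.Adj (f i) (f (i + 1))) →
    ∃ i j : ZMod n, i ≠ j ∧ j ≠ i + 1 ∧ i ≠ j + 1 ∧ H.Adj (f i) (f j)

/-- `H` is a triangulation of `G` (on the same vertex set). -/
def IsTri (G H : SimpleGraph V) : Prop :=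
  IsChordal H ∧ G ≤ H

/-- `H` is a minimal triangulation of `G`. -/
def IsMinTri (G H : SimpleGraph V) : Prop :=
  IsTri G H ∧ ∀ H' : SimpleGraph V, IsTri G H' → H' ≤ H → H' = H

/-- `Ω` is a maximal clique of `H`. -/
def IsMaxClique (H : SimpleGraph V) (Ω : Set V) : Prop :=
  H.IsClique Ω ∧ ∀ Ω' : Set V, H.IsClique Ω' → Ω ⊆ Ω' → Ω' = Ω

/-- `Ω` is a potential maximal clique of `G`: a maximal clique of some minimal triangulation. -/
def IsPMC (G : SimpleGraph V) (Ω : Set V) : Prop :=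
  ∃ H : SimpleGraph V, IsMinTri G H ∧ IsMaxClique H Ω

/-- `W` is an edge clique cover of `G`: a finite collection of cliques covering all edges. -/
def IsECC (G : SimpleGraph V) (W : Finset (Set V)) : Prop :=
  (∀ K ∈ W, G.IsClique K) ∧ ∀ u v : V, G.Adj u v → ∃ K ∈ W, u ∈ K ∧ v ∈ K

/-- `W[X]`: the cliques of `W` intersecting the vertex set `X`. -/
noncomputable def meeting (W : Finset (Set V)) (X : Set V) : Finset (Set V) :=
  W.filter (fun K => (K ∩ X).Nonempty)

/-- `V(G, W')`: the vertices all of whose cliques (within `W`) belong to `W'`. -/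
def partVerts (W W' : Finset (Set V)) : Set V :=
  {v | ∀ K ∈ W, v ∈ K → K ∈ W'}

/-- The connected components of the subgraph of `G` induced on a vertex set `Y`. -/
def compsOf (G : SimpleGraph V) (Y : Set V) : Set (Set V) :=
  {C | IsCompOf G Yᶜ C}

/-- `C(W')`: the components of the part `W'` of the edge clique cover `W`. -/
def partComps (G : SimpleGraph V) (W W' : Finset (Set V)) : Set (Set V) :=
  compsOf G (partVerts W W')

/-- `W'` is a good part of `W`: a nonempty subset all of whose components are blocks of `G`. -/
def IsGoodPart (G : SimpleGraph V) (W W' : Finset (Set V)) : Prop :=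
  W' ⊆ W ∧ W'.Nonempty ∧ ∀ C ∈ partComps G W W', IsBlock G C

/-- The realization `R(C)` of a block `C`, as a graph supported on `N[C]`:
edges of `G[N[C]]` together with all pairs inside `N(C)`. -/
def realization (G : SimpleGraph V) (C : Set V) : SimpleGraph V where
  Adj u v := u ≠ v ∧ u ∈ closedNbhd G C ∧ v ∈ closedNbhd G C ∧
    (G.Adj u v ∨ (u ∈ nbhd G C ∧ v ∈ nbhd G C))
  symm := by
    constructor
    intro u v h
    exact ⟨h.1.symm, h.2.2.1, h.2.1, h.2.2.2.elim (fun a => Or.inl a.symm)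
      (fun a => Or.inr ⟨a.2, a.1⟩)⟩
  loopless := ⟨fun u h => h.1 rfl⟩

/-- The complete graph on the vertex set `Ω` (supported on `Ω`): all pairs inside `Ω`. -/
def cliqueOn (Ω : Set V) : SimpleGraph V where
  Adj u v := u ≠ v ∧ u ∈ Ω ∧ v ∈ Ω
  symm := ⟨fun u v h => ⟨h.1.symm, h.2.2, h.2.1⟩⟩
  loopless := ⟨fun u h => h.1 rfl⟩

/-- The induced subgraph `G[A]`, as a graph supported on `A`. -/
def inducedOn (G : SimpleGraph V) (A : Set V) : SimpleGraph V where
  Adj u v := G.Adj u v ∧ u ∈ A ∧ v ∈ A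
  symm := ⟨fun u v h => ⟨h.1.symm, h.2.2, h.2.1⟩⟩
  loopless := ⟨fun u h => G.irrefl h.1⟩

/-- All edges of `H` lie inside the vertex set `A` (i.e. `H` has vertex set `A`). -/
def edgesWithin (H : SimpleGraph V) (A : Set V) : Prop :=
  ∀ u v : V, H.Adj u v → u ∈ A ∧ v ∈ A

/-- `H` is a triangulation of the graph `G'` with vertex set `A`. -/
def IsTriOn (G' : SimpleGraph V) (A : Set V) (H : SimpleGraph V) : Prop :=
  IsChordal H ∧ G' ≤ H ∧ edgesWithin H A

/-- `H` is a minimal triangulation of the graph `G'` with vertex set `A`. -/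
def IsMinTriOn (G' : SimpleGraph V) (A : Set V) (H : SimpleGraph V) : Prop :=
  IsTriOn G' A H ∧ ∀ H' : SimpleGraph V, IsTriOn G' A H' → H' ≤ H → H' = H

/-- `M` is a module of `G`. -/
def IsModule (G : SimpleGraph V) (M : Set V) : Prop :=
  ∀ v ∉ M, (∀ u ∈ M, G.Adj v u) ∨ (∀ u ∈ M, ¬ G.Adj v u)

section Basics

variable {G H : SimpleGraph V}

lemma IsCompOf.nonempty {X C : Set V} (h : IsCompOf G X C) : C.Nonempty := h.1
lemma IsCompOf.disjoint {X C : Set V} (h : IsCompOf G X C) : Disjoint C X := h.2.1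
lemma IsCompOf.connected {X C : Set V} (h : IsCompOf G X C) : (G.induce C).Connected := h.2.2.1
lemma IsCompOf.closed {X C : Set V} (h : IsCompOf G X C) :
    ∀ u ∈ C, ∀ v, v ∉ X → G.Adj u v → v ∈ C := h.2.2.2

lemma IsCompOf.not_mem_X {X C : Set V} (h : IsCompOf G X C) {v : V} (hv : v ∈ C) : v ∉ X :=
  fun hX => Set.disjoint_left.mp h.disjoint hv hX

/-- a connected set disjoint from `X` meeting a component of `G \ X` is contained in it -/
lemma subset_comp_of_connected {X C D : Set V} (hD : IsCompOf G X D)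
    (hconn : (G.induce C).Connected) (hdisj : Disjoint C X) (hne : (C ∩ D).Nonempty) :
    C ⊆ D := by
  obtain ⟨x, hxC, hxD⟩ := hne
  intro y hyC
  have hreach : (G.induce C).Reachable ⟨x, hxC⟩ ⟨y, hyC⟩ := hconn.preconnected _ _
  obtain ⟨w⟩ := hreach
  -- induct along the walk
  have : ∀ (a b : ↥C), (G.induce C).Walk a b → (a : V) ∈ D → (b : V) ∈ D := by
    intro a b w
    induction w with
    | nil => exact fun h => h
    | cons h p ih =>
        intro ha
        exact ih (hD.closed _ ha _ (fun hX => Set.disjoint_left.mp hdisj (Subtype.mem _) hX) h)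
  exact this _ _ w hxD

lemma comp_eq_of_inter {X C D : Set V} (hC : IsCompOf G X C) (hD : IsCompOf G X D)
    (hne : (C ∩ D).Nonempty) : C = D := by
  refine Set.Subset.antisymm ?_ ?_
  · exact subset_comp_of_connected hD hC.connected hC.disjoint hne
  · exact subset_comp_of_connected hC hD.connected hD.disjoint
      (by obtain ⟨x, h1, h2⟩ := hne; exact ⟨x, h2, h1⟩)

lemma comp_disjoint {X C D : Set V} (hC : IsCompOf G X C) (hD : IsCompOf G X D)
    (hne : C ≠ D) : Disjoint C D := by
  rw [Set.disjoint_left]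
  intro a haC haD
  exact hne (comp_eq_of_inter hC hD ⟨a, haC, haD⟩)

/-- existence of the component containing a vertex outside `X` -/
lemma comp_exists {X : Set V} {v : V} (hv : v ∉ X) :
    ∃ C : Set V, IsCompOf G X C ∧ v ∈ C := by
  classical
  set r := fun a b : V => a ∉ X ∧ b ∉ X ∧ G.Adj a b with hr
  set C := {w | Relation.ReflTransGen r v w} with hC
  have hmemX : ∀ w ∈ C, w ∉ X := by
    intro w hw
    induction hw with
    | refl => exact hv
    | tail _ h ih => exact h.2.1
  have hvC : v ∈ C := Relation.ReflTransGen.refl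
  refine ⟨C, ⟨⟨v, hvC⟩, ?_, ?_, ?_⟩, hvC⟩
  · rw [Set.disjoint_left]; exact fun a ha haX => hmemX a ha haX
  · rw [SimpleGraph.connected_iff]
    refine ⟨?_, ⟨⟨v, hvC⟩⟩⟩
    · -- preconnected: reach everything from v
      have key : ∀ w (hw : w ∈ C), (G.induce C).Reachable ⟨v, hvC⟩ ⟨w, hw⟩ := by
        intro w hw
        induction hw with
        | refl => exact SimpleGraph.Reachable.refl _
        | @tail b c hb hbc ih =>
            refine ih.trans ?_
            exact SimpleGraph.Adj.reachable (by exact hbc.2.2)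
        
      intro a b
      exact ((key a a.2).symm.trans (key b b.2))
  · intro u hu w hwX hadj
    exact Relation.ReflTransGen.tail hu ⟨hmemX u hu, hwX, hadj⟩

lemma nbhd_subset_of_comp {Ω C : Set V} (hC : IsCompOf G Ω C) : nbhd G C ⊆ Ω := by
  intro x hx
  obtain ⟨hxC, u, huC, hadj⟩ := hx
  by_contra hxΩ
  exact hxC (hC.closed u huC x hxΩ hadj)

lemma comp_of_nbhd {Ω C : Set V} (hC : IsCompOf G Ω C) : IsCompOf G (nbhd G C) C := by
  refine ⟨hC.nonempty, ?_, hC.connected, ?_⟩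
  · rw [Set.disjoint_left]; intro a haC haN; exact haN.1 haC
  · intro u huC w hwN hadj
    by_contra hwC
    exact hwN ⟨hwC, u, huC, hadj⟩

lemma mem_closedNbhd_of_mem {C : Set V} {v : V} (h : v ∈ C) : v ∈ closedNbhd G C :=
  Or.inl h

lemma closedNbhd_inter_comps {Ω C C' : Set V} (hC : IsCompOf G Ω C) (hC' : IsCompOf G Ω C')
    (hne : C ≠ C') : closedNbhd G C ∩ closedNbhd G C' ⊆ nbhd G C ∩ nbhd G C' := by
  intro x ⟨hx1, hx2⟩
  have hd := comp_disjoint hC hC' hne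
  have hxC : x ∉ C' → x ∉ C → x ∈ nbhd G C ∩ nbhd G C' := by
    intro h1 h2
    exact ⟨hx1.resolve_left h2, hx2.resolve_left h1⟩
  by_cases hxc : x ∈ C
  · -- then x ∈ closedNbhd C' : x ∈ C' impossible; x ∈ nbhd C' means adj to C', but closure
    exfalso
    rcases hx2 with h | h
    · exact Set.disjoint_left.mp hd hxc h
    · obtain ⟨hxn, u, huC', hadj⟩ := h
      have : x ∈ C' := hC'.closed u huC' x (hC.not_mem_X hxc) hadj
      exact hxn this
  · by_cases hxc' : x ∈ C'
    · exfalso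
      rcases hx1 with h | h
      · exact hxc h
      · obtain ⟨hxn, u, huC, hadj⟩ := h
        have : x ∈ C := hC.closed u huC x (hC'.not_mem_X hxc') hadj
        exact hxn this
    · exact hxC hxc' hxc

lemma omega_inter_closedNbhd {Ω C : Set V} (hC : IsCompOf G Ω C) :
    Ω ∩ closedNbhd G C ⊆ nbhd G C := by
  intro x ⟨hx1, hx2⟩
  rcases hx2 with h | h
  · exact absurd hx1 (hC.not_mem_X h)
  · exact h

end Basics
section CycleToolkit

variable {H : SimpleGraph V}

/-- Build a cycle in `ZMod n` from a cyclic `ℕ`-indexed vertex function and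
derive a contradiction from chordality if there are no chords. -/
lemma cycle_contra (hch : IsChordal H) {n : ℕ} (hn : 4 ≤ n) (F : ℕ → V)
    (hinj : ∀ a b, a < n → b < n → F a = F b → a = b)
    (hadj : ∀ k, k + 1 < n → H.Adj (F k) (F (k + 1)))
    (hwrap : H.Adj (F (n - 1)) (F 0))
    (hnochord : ∀ a b, a < b → b < n → b ≠ a + 1 → ¬(a = 0 ∧ b = n - 1) →
      ¬H.Adj (F a) (F b)) : False := by
  haveI : NeZero n := ⟨by omega⟩
  set f : ZMod n → V := fun i => F i.val with hf
  have hvlt : ∀ i : ZMod n, i.val < n := fun i => ZMod.val_lt i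
  have hfinj : Function.Injective f := by
    intro i j hij
    have := hinj i.val j.val (hvlt i) (hvlt j) hij
    exact ZMod.val_injective n this
  have hsucc : ∀ i : ZMod n, (i + 1).val = if i.val = n - 1 then 0 else i.val + 1 := by
    intro i
    have h1 : (1 : ZMod n).val = 1 := ZMod.val_one_eq_one_mod n ▸ by
      rw [Nat.mod_eq_of_lt (by omega)]
    rw [ZMod.val_add, h1]
    by_cases h : i.val = n - 1
    · rw [h, if_pos rfl]
      have h2 : n - 1 + 1 = n := by omega
      rw [h2, Nat.mod_self]
    · have := hvlt i
      rw [Nat.mod_eq_of_lt (by omega), if_neg h]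
  have hfadj : ∀ i : ZMod n, H.Adj (f i) (f (i + 1)) := by
    intro i
    rw [hf]
    simp only
    rw [hsucc i]
    by_cases h : i.val = n - 1
    · simp only [h, if_pos rfl]
      exact hwrap
    · rw [if_neg h]
      exact hadj i.val (by have := hvlt i; omega)
  obtain ⟨i, j, hij, hji1, hij1, hadj'⟩ := hch n hn f hfinj hfadj
  -- translate back to ℕ
  have hvij : i.val ≠ j.val := fun h => hij (ZMod.val_injective n h)
  -- wlog val i < val j
  rcases Nat.lt_or_ge i.val j.val with hlt | hge
  · refine hnochord i.val j.val hlt (hvlt j) ?_ ?_ hadj'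
    · intro h
      apply hji1
      have hi := hvlt i; have hj := hvlt j
      have : j.val = (i + 1).val := by rw [hsucc i]; split <;> omega
      exact ZMod.val_injective n this
    · rintro ⟨h0, hn1⟩
      apply hij1
      have hi := hvlt i; have hj := hvlt j
      have : i.val = (j + 1).val := by rw [hsucc j]; split <;> omega
      exact ZMod.val_injective n this
  · have hlt : j.val < i.val := by omega
    refine hnochord j.val i.val hlt (hvlt i) ?_ ?_ hadj'.symm
    · intro h
      apply hij1
      have hi := hvlt i; have hj := hvlt j
      have : i.val = (j + 1).val := by rw [hsucc j]; split <;> omega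
      exact ZMod.val_injective n this
    · rintro ⟨h0, hn1⟩
      apply hji1
      have hi := hvlt i; have hj := hvlt j
      have : j.val = (i + 1).val := by rw [hsucc i]; split <;> omega
      exact ZMod.val_injective n this

end CycleToolkit
section WFun

variable {H : SimpleGraph V} {G : SimpleGraph V}

/-- A walk from `x` to `y` of length `k` (as an indexed function) with interior in `A`. -/
def WFun (H : SimpleGraph V) (x y : V) (A : Set V) (k : ℕ) (g : ℕ → V) : Prop :=
  g 0 = x ∧ g k = y ∧ (∀ i, i < k → H.Adj (g i) (g (i + 1))) ∧
    (∀ i, 0 < i → i < k → g i ∈ A)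

lemma wfun_single {x y : V} {A : Set V} (h : H.Adj x y) :
    WFun H x y A 1 (fun i => if i = 0 then x else y) := by
  refine ⟨rfl, rfl, ?_, ?_⟩
  · intro i hi
    interval_cases i
    simpa using h
  · intro i h1 h2; omega

lemma wfun_concat {x y z : V} {A : Set V} {k l : ℕ} {g g' : ℕ → V}
    (h1 : WFun H x y A k g) (h2 : WFun H y z A l g') (hy : y ∈ A) :
    WFun H x z A (k + l) (fun i => if i ≤ k then g i else g' (i - k)) := by
  obtain ⟨hg0, hgk, hgadj, hgint⟩ := h1
  obtain ⟨hg'0, hg'l, hg'adj, hg'int⟩ := h2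
  refine ⟨by simpa using hg0, ?_, ?_, ?_⟩
  · dsimp only
    by_cases hl : l = 0
    · rw [if_pos (by omega), hl, Nat.add_zero, hgk, ← hg'0, ← hl, hg'l]
    · rw [if_neg (by omega), Nat.add_sub_cancel_left, hg'l]
  · intro i hi
    dsimp only
    by_cases h : i + 1 ≤ k
    · rw [if_pos (by omega : i ≤ k), if_pos h]
      exact hgadj i (by omega)
    · by_cases h' : i ≤ k
      · have hik : i = k := by omega
        rw [if_pos h', if_neg h, hik, Nat.add_sub_cancel_left, hgk, ← hg'0]
        exact hg'adj 0 (by omega)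
      · rw [if_neg h', if_neg h]
        have h2 : i + 1 - k = (i - k) + 1 := by omega
        rw [h2]
        exact hg'adj (i - k) (by omega)
  · intro i h0 hik
    dsimp only
    by_cases h : i ≤ k
    · by_cases h' : i = k
      · rw [if_pos h, h', hgk]; exact hy
      · rw [if_pos h]; exact hgint i h0 (by omega)
    · rw [if_neg h]
      exact hg'int (i - k) (by omega) (by omega)

lemma wfun_of_reachable {C : Set V} (hGH : G ≤ H) {c c' : V} (hc : c ∈ C) (hc' : c' ∈ C)
    (h : (G.induce C).Reachable ⟨c, hc⟩ ⟨c', hc'⟩) :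
    ∃ k g, WFun H c c' C k g ∧ (∀ i, g i ∈ C) := by
  have key : ∀ (a b : ↥C) (w : (G.induce C).Walk a b),
      ∃ k g, WFun H (a : V) (b : V) C k g ∧ (∀ i, g i ∈ C) := by
    intro a b w
    induction w with
    | nil =>
        rename_i u
        exact ⟨0, fun _ => (u : V), ⟨rfl, rfl, fun i hi => by omega,
          fun i h1 h2 => by omega⟩, fun i => u.2⟩
    | @cons a b c'' hab p ih =>
        obtain ⟨k, g, hWF, hgC⟩ := ih
        have hadj : H.Adj (a : V) (b : V) := hGH (by exact hab)
        have h1 := wfun_single (A := C) hadj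
        have := wfun_concat h1 hWF b.2
        refine ⟨1 + k, _, this, ?_⟩
        intro i
        by_cases h : i ≤ 1
        · simp only [if_pos h]
          split
          · exact a.2
          · exact b.2
        · simp only [if_neg h]
          exact hgC (i - 1)
  exact key _ _ h.some

end WFun
section Shortest

variable {H : SimpleGraph V}

lemma wfun_shortest {x y : V} {A : Set V} (hxy : x ≠ y) (hnadj : ¬H.Adj x y)
    (hex : ∃ k g, WFun H x y A k g) :
    ∃ k g, 2 ≤ k ∧ WFun H x y A k g ∧
      (∀ a b, a + 2 ≤ b → b ≤ k → ¬H.Adj (g a) (g b)) ∧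
      (∀ a b, a ≤ k → b ≤ k → g a = g b → a = b) := by
  classical
  have hP : ∃ k, ∃ g, WFun H x y A k g := by
    obtain ⟨k, g, hg⟩ := hex; exact ⟨k, g, hg⟩
  have hmin : ∀ m, m < Nat.find hP → ¬∃ g, WFun H x y A m g := fun m hm => Nat.find_min hP hm
  obtain ⟨g, hg⟩ := Nat.find_spec hP
  revert hmin hg
  generalize Nat.find hP = k
  intro hmin hg
  obtain ⟨hg0, hgk, hgadj, hgint⟩ := hg
  have hk0 : k ≠ 0 := by
    intro h
    exact hxy (by rw [← hg0, ← hgk, h])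
  have hk1 : k ≠ 1 := by
    intro h
    apply hnadj
    have h2 := hgadj 0 (by omega)
    rw [hg0, show (0 + 1 : ℕ) = k from by omega, hgk] at h2
    exact h2
  have hk2 : 2 ≤ k := by omega
  refine ⟨k, g, hk2, ⟨hg0, hgk, hgadj, hgint⟩, ?_, ?_⟩
  · -- no chords
    intro a b hab hbk hadj
    apply hmin (k - (b - a - 1)) (by omega)
    refine ⟨fun i => if i ≤ a then g i else g (i + (b - a - 1)), ?_, ?_, ?_, ?_⟩
    · dsimp only
      rw [if_pos (by omega), hg0]
    · dsimp only
      rw [if_neg (by omega)]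
      have : k - (b - a - 1) + (b - a - 1) = k := by omega
      rw [this, hgk]
    · intro i hi
      dsimp only
      by_cases h : i + 1 ≤ a
      · rw [if_pos (by omega), if_pos h]
        exact hgadj i (by omega)
      · by_cases h' : i ≤ a
        · have hia : i = a := by omega
          rw [if_pos h', if_neg h, hia]
          have : a + 1 + (b - a - 1) = b := by omega
          rw [this]
          exact hadj
        · rw [if_neg h', if_neg h]
          have h2 : i + 1 + (b - a - 1) = (i + (b - a - 1)) + 1 := by omega
          rw [h2]
          exact hgadj (i + (b - a - 1)) (by omega)
    · intro i h0 hik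
      dsimp only
      by_cases h : i ≤ a
      · rw [if_pos h]
        exact hgint i h0 (by omega)
      · rw [if_neg h]
        exact hgint (i + (b - a - 1)) (by omega) (by omega)
  · -- injectivity
    intro a b hak hbk heq
    by_contra hne
    -- wlog a < b
    wlog hlt : a < b generalizing a b
    · exact this b a hbk hak heq.symm (Ne.symm hne) (by omega)
    apply hmin (k - (b - a)) (by omega)
    refine ⟨fun i => if i ≤ a then g i else g (i + (b - a)), ?_, ?_, ?_, ?_⟩
    · dsimp only
      rw [if_pos (by omega), hg0]
    · dsimp only
      by_cases h : k - (b - a) ≤ a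
      · -- then b = k and k - (b-a) = a
        have h1 : b = k ∧ k - (b - a) = a := by omega
        rw [if_pos h, h1.2, heq, h1.1, hgk]
      · rw [if_neg h]
        have : k - (b - a) + (b - a) = k := by omega
        rw [this, hgk]
    · intro i hi
      dsimp only
      by_cases h : i + 1 ≤ a
      · rw [if_pos (by omega), if_pos h]
        exact hgadj i (by omega)
      · by_cases h' : i ≤ a
        · have hia : i = a := by omega
          rw [if_pos h', if_neg h, hia, heq]
          have : a + 1 + (b - a) = b + 1 := by omega
          rw [this]
          exact hgadj b (by omega)
        · rw [if_neg h', if_neg h]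
          have h2 : i + 1 + (b - a) = (i + (b - a)) + 1 := by omega
          rw [h2]
          exact hgadj (i + (b - a)) (by omega)
    · intro i h0 hik
      dsimp only
      by_cases h : i ≤ a
      · rw [if_pos h]
        exact hgint i h0 (by omega)
      · rw [if_neg h]
        exact hgint (i + (b - a)) (by omega) (by omega)

end Shortest
section Gadgets

variable {H : SimpleGraph V}

/-- A chordless path of length ≥ 2 plus an apex adjacent to both endpoints but to no
interior vertex yields a chordless cycle: contradiction with chordality. -/
lemma path_apex_contra (hch : IsChordal H) {k : ℕ} (hk : 2 ≤ k) {g : ℕ → V}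
    (hadj : ∀ i, i < k → H.Adj (g i) (g (i + 1)))
    (hinj : ∀ a b, a ≤ k → b ≤ k → g a = g b → a = b)
    (hnochord : ∀ a b, a + 2 ≤ b → b ≤ k → ¬H.Adj (g a) (g b))
    {t : V} (ht0 : H.Adj t (g 0)) (htk : H.Adj t (g k))
    (htne : ∀ i, i ≤ k → t ≠ g i)
    (htint : ∀ i, 0 < i → i < k → ¬H.Adj t (g i)) : False := by
  apply cycle_contra hch (n := k + 2) (by omega) (fun m => if m ≤ k then g m else t)
  · intro a b ha hb heq
    by_cases h1 : a ≤ k <;> by_cases h2 : b ≤ k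
    · rw [if_pos h1, if_pos h2] at heq
      exact hinj a b h1 h2 heq
    · rw [if_pos h1, if_neg h2] at heq
      exact absurd heq.symm (htne a h1)
    · rw [if_neg h1, if_pos h2] at heq
      exact absurd heq (htne b h2)
    · omega
  · intro m hm
    by_cases h1 : m + 1 ≤ k
    · rw [if_pos (by omega), if_pos h1]
      exact hadj m (by omega)
    · have hmk : m = k := by omega
      rw [if_pos (by omega), if_neg (by omega), hmk]
      exact htk.symm
  · rw [show k + 2 - 1 = k + 1 from by omega, if_neg (by omega), if_pos (by omega)]
    exact ht0
  · intro a b hab hbn hbne1 hban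
    by_cases h2 : b ≤ k
    · rw [if_pos (by omega), if_pos h2]
      exact hnochord a b (by omega) h2
    · have hb : b = k + 1 := by omega
      have ha0 : a ≠ 0 := fun h => hban ⟨h, by omega⟩
      have hak : a ≠ k := by omega
      rw [if_pos (by omega), if_neg (by omega)]
      intro hc
      exact htint a (by omega) (by omega) hc.symm

/-- Two internally-disjoint chordless paths between nonadjacent `x, y`, with no edges
between their interiors, yield a chordless cycle: contradiction with chordality. -/
lemma two_path_contra (hch : IsChordal H) {x y : V} {k l : ℕ} (hk : 2 ≤ k) (hl : 2 ≤ l)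
    {g g' : ℕ → V}
    (hg0 : g 0 = x) (hgk : g k = y) (hg'0 : g' 0 = x) (hg'l : g' l = y)
    (hadj : ∀ i, i < k → H.Adj (g i) (g (i + 1)))
    (hadj' : ∀ i, i < l → H.Adj (g' i) (g' (i + 1)))
    (hinj : ∀ a b, a ≤ k → b ≤ k → g a = g b → a = b)
    (hinj' : ∀ a b, a ≤ l → b ≤ l → g' a = g' b → a = b)
    (hnochord : ∀ a b, a + 2 ≤ b → b ≤ k → ¬H.Adj (g a) (g b))
    (hnochord' : ∀ a b, a + 2 ≤ b → b ≤ l → ¬H.Adj (g' a) (g' b))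
    (hdisj : ∀ i j, 0 < i → i < k → 0 < j → j < l → g i ≠ g' j)
    (hcross : ∀ i j, 0 < i → i < k → 0 < j → j < l → ¬H.Adj (g i) (g' j)) : False := by
  set n := k + l with hn
  have hyl : g' l = g k := by rw [hgk, hg'l]
  apply cycle_contra hch (n := n) (by omega) (fun m => if m ≤ k then g m else g' (n - m))
  · intro a b ha hb heq
    by_cases h1 : a ≤ k <;> by_cases h2 : b ≤ k
    · rw [if_pos h1, if_pos h2] at heq
      exact hinj a b h1 h2 heq
    · rw [if_pos h1, if_neg h2] at heq
      -- g a = g' (n - b), with 1 ≤ n - b ≤ l - 1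
      exfalso
      have hb1 : 1 ≤ n - b ∧ n - b ≤ l - 1 := by omega
      by_cases ha0 : a = 0
      · rw [ha0, hg0, ← hg'0] at heq
        have := hinj' 0 (n - b) (by omega) (by omega) heq
        omega
      · by_cases hak : a = k
        · rw [hak, ← hyl] at heq
          have := hinj' l (n - b) le_rfl (by omega) heq
          omega
        · exact hdisj a (n - b) (by omega) (by omega) (by omega) (by omega) heq
    · rw [if_neg h1, if_pos h2] at heq
      exfalso
      have ha1 : 1 ≤ n - a ∧ n - a ≤ l - 1 := by omega
      by_cases hb0 : b = 0
      · rw [hb0, hg0, ← hg'0] at heq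
        have := hinj' 0 (n - a) (by omega) (by omega) heq.symm
        omega
      · by_cases hbk : b = k
        · rw [hbk, ← hyl] at heq
          have := hinj' l (n - a) le_rfl (by omega) heq.symm
          omega
        · exact hdisj b (n - a) (by omega) (by omega) (by omega) (by omega) heq.symm
    · rw [if_neg h1, if_neg h2] at heq
      have := hinj' (n - a) (n - b) (by omega) (by omega) heq
      omega
  · intro m hm
    by_cases h1 : m + 1 ≤ k
    · rw [if_pos (by omega), if_pos h1]
      exact hadj m (by omega)
    · by_cases h2 : m ≤ k
      · -- m = k
        have hmk : m = k := by omega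
        rw [if_pos h2, if_neg (by omega), hmk, ← hyl,
          show n - (k + 1) = (l - 1) from by omega]
        have := hadj' (l - 1) (by omega)
        rw [show l - 1 + 1 = l from by omega] at this
        exact this.symm
      · rw [if_neg h2, if_neg (by omega)]
        have h3 : n - (m + 1) < l := by omega
        have := hadj' (n - (m + 1)) h3
        rw [show n - (m + 1) + 1 = n - m from by omega] at this
        exact this.symm
  · rw [if_neg (by omega), if_pos (by omega), show n - (n - 1) = 1 from by omega, hg0, ← hg'0]
    exact (hadj' 0 (by omega)).symm
  · intro a b hab hbn hbne1 hban
    by_cases h2 : b ≤ k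
    · rw [if_pos (by omega), if_pos h2]
      exact hnochord a b (by omega) h2
    · by_cases h1 : a ≤ k
      · by_cases hak : a = k
        · -- both on the g' side:  a ↦ l, b ↦ n - b
          rw [if_pos h1, if_neg (by omega), hak, ← hyl]
          intro hc
          exact hnochord' (n - b) l (by omega) le_rfl hc.symm
        · by_cases ha0 : a = 0
          · rw [if_pos h1, if_neg (by omega), ha0, hg0, ← hg'0]
            intro hc
            have hbn1 : b ≠ n - 1 := fun h => hban ⟨ha0, by omega⟩
            exact hnochord' 0 (n - b) (by omega) (by omega) hc
          · rw [if_pos h1, if_neg (by omega)]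
            exact hcross a (n - b) (by omega) (by omega) (by omega) (by omega)
      · -- both interior on g' side
        rw [if_neg h1, if_neg (by omega)]
        intro hc
        exact hnochord' (n - b) (n - a) (by omega) (by omega) hc.symm

end Gadgets
section SepClique

variable {G H : SimpleGraph V}

/-- In a chordal graph `H ⊇ G`, two vertices with neighbors in two `G`-connected sets
`C, D` that are disjoint and have no `H`-edges between them must be adjacent. -/
lemma sep_clique (hch : IsChordal H) (hGH : G ≤ H) {C D : Set V} {x y : V} (hxy : x ≠ y)
    (hCconn : (G.induce C).Connected) (hDconn : (G.induce D).Connected)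
    (hCD : Disjoint C D)
    (hnoedge : ∀ c ∈ C, ∀ d ∈ D, ¬H.Adj c d)
    (hxC : ∃ c ∈ C, G.Adj x c) (hyC : ∃ c ∈ C, G.Adj y c)
    (hxD : ∃ d ∈ D, G.Adj x d) (hyD : ∃ d ∈ D, G.Adj y d) :
    H.Adj x y := by
  by_contra hn
  have build : ∀ (A : Set V), (G.induce A).Connected → (∃ c ∈ A, G.Adj x c) →
      (∃ c ∈ A, G.Adj y c) → ∃ k g, WFun H x y A k g := by
    intro A hconn ⟨cx, hcx, hcxadj⟩ ⟨cy, hcy, hcyadj⟩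
    obtain ⟨k1, g1, hW1, hg1A⟩ := wfun_of_reachable hGH hcx hcy (hconn.preconnected _ _)
    have e1 : WFun H x cx A 1 _ := wfun_single (hGH hcxadj)
    have e2 : WFun H cy y A 1 _ := wfun_single (hGH hcyadj.symm)
    have c1 := wfun_concat e1 hW1 hcx
    have c2 := wfun_concat c1 e2 hcy
    exact ⟨_, _, c2⟩
  obtain ⟨k, g, hk, ⟨hg0, hgk, hgadj, hgint⟩, hgnc, hginj⟩ :=
    wfun_shortest hxy hn (build C hCconn hxC hyC)
  obtain ⟨l, g', hl, ⟨hg'0, hg'l, hg'adj, hg'int⟩, hg'nc, hg'inj⟩ :=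
    wfun_shortest hxy hn (build D hDconn hxD hyD)
  exact two_path_contra hch hk hl hg0 hgk hg'0 hg'l (fun i hi => hgadj i hi)
    (fun i hi => hg'adj i hi) hginj hg'inj
    (fun a b h1 h2 => hgnc a b h1 h2) (fun a b h1 h2 => hg'nc a b h1 h2)
    (fun i j h1 h2 h3 h4 heq =>
      Set.disjoint_left.mp hCD (hgint i h1 h2) (heq ▸ hg'int j h3 h4))
    (fun i j h1 h2 h3 h4 => hnoedge _ (hgint i h1 h2) _ (hg'int j h3 h4))

/-- **L1**: In a chordal graph `H ⊇ G`, if `S` is an `H`-clique, `C` is `G`-connected and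
disjoint from `S`, and every vertex of `S` has a `G`-neighbor in `C`, then some vertex
of `C` is `H`-adjacent to all of `S`. -/
lemma clique_attach [Fintype V] (hch : IsChordal H) (hGH : G ≤ H) {S C : Set V}
    (hSC : Disjoint S C)
    (hS : ∀ s ∈ S, ∀ s' ∈ S, s ≠ s' → H.Adj s s')
    (hCconn : (G.induce C).Connected)
    (hattach : ∀ s ∈ S, ∃ c ∈ C, G.Adj s c) :
    ∃ c ∈ C, ∀ s ∈ S, H.Adj c s := by
  classical
  have hCne : C.Nonempty := by
    obtain ⟨⟨c, hc⟩⟩ := hCconn.nonempty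
    exact ⟨c, hc⟩
  obtain ⟨n, hn⟩ : ∃ n, S.ncard ≤ n := ⟨S.ncard, le_rfl⟩
  induction n generalizing S with
  | zero =>
      have hS0 : S = ∅ := (Set.ncard_eq_zero (Set.toFinite S)).mp (by omega)
      obtain ⟨c, hc⟩ := hCne
      exact ⟨c, hc, by simp [hS0]⟩
  | succ n ih =>
      rcases Set.eq_empty_or_nonempty S with hS0 | ⟨s, hsS⟩
      · obtain ⟨c, hc⟩ := hCne
        exact ⟨c, hc, by simp [hS0]⟩
      set S₀ := S \ {s} with hS₀def
      have hS₀sub : S₀ ⊆ S := Set.diff_subset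
      have hcard : S₀.ncard ≤ n := by
        have h1 : S₀.ncard = S.ncard - 1 := Set.ncard_diff_singleton_of_mem hsS
        have h2 : 0 < S.ncard := (Set.ncard_pos (Set.toFinite S)).mpr ⟨s, hsS⟩
        omega
      obtain ⟨c₀, hc₀C, hc₀adj⟩ := ih (Set.disjoint_of_subset_left hS₀sub hSC)
        (fun a ha b hb hab => hS a (hS₀sub ha) b (hS₀sub hb) hab)
        (fun a ha => hattach a (hS₀sub ha)) hcard
      by_cases hc₀s : H.Adj c₀ s
      · refine ⟨c₀, hc₀C, ?_⟩
        intro s' hs'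
        by_cases h : s' = s
        · rw [h]; exact hc₀s
        · exact hc₀adj s' ⟨hs', h⟩
      · -- build shortest path from s to c₀ through C
        have hsc₀ : s ≠ c₀ := fun h => Set.disjoint_left.mp hSC hsS (h ▸ hc₀C)
        have hnadj : ¬H.Adj s c₀ := fun h => hc₀s h.symm
        have hbuild : ∃ k g, WFun H s c₀ C k g := by
          obtain ⟨c, hcC, hcadj⟩ := hattach s hsS
          obtain ⟨k1, g1, hW1, _⟩ := wfun_of_reachable hGH hcC hc₀C
            (hCconn.preconnected _ _)
          exact ⟨_, _, wfun_concat (wfun_single (hGH hcadj)) hW1 hcC⟩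
        obtain ⟨k, g, hk, ⟨hg0, hgk, hgadj, hgint⟩, hgnc, hginj⟩ :=
          wfun_shortest hsc₀ hnadj hbuild
        by_cases hall : ∀ t ∈ S₀, H.Adj (g 1) t
        · refine ⟨g 1, hgint 1 (by omega) (by omega), ?_⟩
          intro s' hs'
          by_cases h : s' = s
          · rw [h, ← hg0]
            exact (hgadj 0 (by omega)).symm
          · exact hall s' ⟨hs', h⟩
        · exfalso
          push_neg at hall
          obtain ⟨t, htS₀, htnadj⟩ := hall
          have htS : t ∈ S := hS₀sub htS₀
          have htnC : t ∉ C := fun h => Set.disjoint_left.mp hSC htS h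
          have hts : H.Adj t s := hS t htS s hsS (fun h => htS₀.2 (by rw [h]; rfl))
          have htc₀ : H.Adj t c₀ := hc₀adj t htS₀ |>.symm
          have hfind : ∃ i, 0 < i ∧ i ≤ k ∧ H.Adj t (g i) := ⟨k, by omega, le_rfl, hgk ▸ htc₀⟩
          obtain ⟨hi0, hik, hiadj⟩ := Nat.find_spec hfind
          have himin' : ∀ j, j < Nat.find hfind → ¬(0 < j ∧ j ≤ k ∧ H.Adj t (g j)) :=
            fun j hj => Nat.find_min hfind hj
          revert hi0 hik hiadj himin'
          generalize Nat.find hfind = i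
          intro hi0 hik hiadj himin'
          have hi2 : 2 ≤ i := by
            rcases Nat.lt_or_ge i 2 with h | h
            · exfalso
              have hi1 : i = 1 := by omega
              rw [hi1] at hiadj
              exact htnadj hiadj.symm
            · exact h
          have himin : ∀ j, 0 < j → j < i → ¬H.Adj t (g j) := by
            intro j hj0 hji hadc
            exact himin' j hji ⟨hj0, by omega, hadc⟩
          refine path_apex_contra hch hi2 (g := g) (fun j hj => hgadj j (by omega))
            (fun a b ha hb => hginj a b (by omega) (by omega))
            (fun a b h1 h2 => hgnc a b h1 (by omega)) (hg0 ▸ hts) hiadj ?_ himin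
          intro j hj heq
          by_cases hj0 : j = 0
          · rw [hj0, hg0] at heq
            exact htS₀.2 (by rw [heq]; rfl)
          · by_cases hjk : j = k
            · rw [hjk, hgk] at heq
              exact Set.disjoint_left.mp hSC (heq ▸ htS) hc₀C
            · exact htnC (heq ▸ hgint j (by omega) (by omega))

end SepClique
section GlueChordal

variable {G A : SimpleGraph V}

/-- Abstract glue chordality: if every edge of `A` is within `Ω` or within the closed
neighborhood of a component of `G \ Ω`, the neighborhoods of components are `A`-cliques,
and cycles confined to `Ω` or to a single closed neighborhood have chords, then `A`
is chordal. -/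
lemma glue_chordal_abstract {Ω : Set V}
    (h1 : ∀ u v, A.Adj u v → (u ∈ Ω ∧ v ∈ Ω) ∨
      ∃ C, IsCompOf G Ω C ∧ u ∈ closedNbhd G C ∧ v ∈ closedNbhd G C)
    (h2 : ∀ C, IsCompOf G Ω C → ∀ x ∈ nbhd G C, ∀ y ∈ nbhd G C, x ≠ y → A.Adj x y)
    (h3 : ∀ n : ℕ, 4 ≤ n → ∀ f : ZMod n → V, Function.Injective f →
      (∀ i, A.Adj (f i) (f (i + 1))) → (∀ i, f i ∈ Ω) →
      ∃ i j : ZMod n, i ≠ j ∧ j ≠ i + 1 ∧ i ≠ j + 1 ∧ A.Adj (f i) (f j))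
    (h4 : ∀ C, IsCompOf G Ω C → ∀ n : ℕ, 4 ≤ n → ∀ f : ZMod n → V, Function.Injective f →
      (∀ i, A.Adj (f i) (f (i + 1))) → (∀ i, f i ∈ closedNbhd G C) →
      ∃ i j : ZMod n, i ≠ j ∧ j ≠ i + 1 ∧ i ≠ j + 1 ∧ A.Adj (f i) (f j)) :
    IsChordal A := by
  intro n hn f hfinj hfadj
  haveI : NeZero n := ⟨by omega⟩
  by_cases hΩ : ∀ i, f i ∈ Ω
  · exact h3 n hn f hfinj hfadj hΩ
  push_neg at hΩ
  obtain ⟨a, haΩ⟩ := hΩ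
  -- find the component containing f a
  have hmemC : ∀ (i : ZMod n) (C' : Set V), IsCompOf G Ω C' → f i ∈ closedNbhd G C' →
      f i ∉ Ω → f i ∈ C' := by
    intro i C' hC' hmem hnΩ
    rcases hmem with h | h
    · exact h
    · exact absurd (nbhd_subset_of_comp hC' h) hnΩ
  obtain ⟨C, hC, haC⟩ : ∃ C, IsCompOf G Ω C ∧ f a ∈ C := by
    rcases h1 _ _ (hfadj a) with ⟨h, _⟩ | ⟨C, hC, hu, _⟩
    · exact absurd h haΩ
    · exact ⟨C, hC, hmemC a C hC hu haΩ⟩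
  by_cases hNC : ∀ i, f i ∈ closedNbhd G C
  · exact h4 C hC n hn f hfinj hfadj hNC
  push_neg at hNC
  obtain ⟨b, hbNC⟩ := hNC
  -- step lemmas
  have hnext : ∀ i : ZMod n, f i ∈ C → f (i + 1) ∈ closedNbhd G C := by
    intro i hi
    rcases h1 _ _ (hfadj i) with ⟨h, _⟩ | ⟨C', hC', hu, hv⟩
    · exact absurd h (hC.not_mem_X hi)
    · have : f i ∈ C' := hmemC i C' hC' hu (hC.not_mem_X hi)
      rwa [comp_eq_of_inter hC hC' ⟨f i, hi, this⟩]
  have hprev : ∀ i : ZMod n, f i ∈ C → f (i - 1) ∈ closedNbhd G C := by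
    intro i hi
    have := hfadj (i - 1)
    rw [sub_add_cancel] at this
    rcases h1 _ _ this with ⟨_, h⟩ | ⟨C', hC', hu, hv⟩
    · exact absurd h (hC.not_mem_X hi)
    · have : f i ∈ C' := hmemC i C' hC' hv (hC.not_mem_X hi)
      rwa [comp_eq_of_inter hC hC' ⟨f i, hi, this⟩]
  have hcast : ∀ m : ZMod n, ((m.val : ℕ) : ZMod n) = m := fun m => ZMod.natCast_rightInverse m
  have hab : b ≠ a := by
    intro h
    exact hbNC (h ▸ (Or.inl haC))
  set k₀ := (b - a).val with hk₀def
  set k₁ := (a - b).val with hk₁def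
  have hk₀pos : 0 < k₀ := by
    rcases Nat.eq_zero_or_pos k₀ with h | h
    · exact absurd (sub_eq_zero.mp ((ZMod.val_eq_zero _).mp h)) hab
    · exact h
  have hk₁pos : 0 < k₁ := by
    rcases Nat.eq_zero_or_pos k₁ with h | h
    · exact absurd (sub_eq_zero.mp ((ZMod.val_eq_zero _).mp h)) (Ne.symm hab)
    · exact h
  have hk₀lt : k₀ < n := ZMod.val_lt _
  have hk₁lt : k₁ < n := ZMod.val_lt _
  have hsum : k₀ + k₁ = n := by
    have h0 : ((k₀ + k₁ : ℕ) : ZMod n) = 0 := by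
      push_cast [hk₀def, hk₁def, hcast]
      ring
    have hdvd := (ZMod.natCast_eq_zero_iff _ _).mp h0
    have hle := Nat.le_of_dvd (by omega) hdvd
    have hdvd2 : n ∣ (k₀ + k₁ - n) := Nat.dvd_sub hdvd dvd_rfl
    have hz : k₀ + k₁ - n = 0 := by
      by_contra hne
      have := Nat.le_of_dvd (by omega) hdvd2
      omega
    omega
  have hfb₀ : f (a + (k₀ : ZMod n)) = f b := by rw [hk₀def, hcast, add_sub_cancel]
  have hfb₁ : f (a - (k₁ : ZMod n)) = f b := by rw [hk₁def, hcast, sub_sub_cancel]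
  -- forward first exit
  have hPne : ∃ m : ℕ, 0 < m ∧ f (a + (m : ZMod n)) ∉ C :=
    ⟨k₀, hk₀pos, fun h => hbNC (hfb₀ ▸ (Or.inl h) : f b ∈ closedNbhd G C)⟩
  have hQne : ∃ m : ℕ, 0 < m ∧ f (a - (m : ZMod n)) ∉ C :=
    ⟨k₁, hk₁pos, fun h => hbNC (hfb₁ ▸ (Or.inl h) : f b ∈ closedNbhd G C)⟩
  classical
  obtain ⟨hp0, hpC⟩ := Nat.find_spec hPne
  obtain ⟨hq0, hqC⟩ := Nat.find_spec hQne
  have hpmin : ∀ m, 0 < m → m < Nat.find hPne → f (a + (m : ZMod n)) ∈ C := by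
    intro m h1' h2'
    by_contra h3'
    exact Nat.find_min hPne h2' ⟨h1', h3'⟩
  have hqmin : ∀ m, 0 < m → m < Nat.find hQne → f (a - (m : ZMod n)) ∈ C := by
    intro m h1' h2'
    by_contra h3'
    exact Nat.find_min hQne h2' ⟨h1', h3'⟩
  have hple : Nat.find hPne ≤ k₀ := Nat.find_min' hPne
    ⟨hk₀pos, fun h => hbNC (hfb₀ ▸ (Or.inl h) : f b ∈ closedNbhd G C)⟩
  have hqle : Nat.find hQne ≤ k₁ := Nat.find_min' hQne
    ⟨hk₁pos, fun h => hbNC (hfb₁ ▸ (Or.inl h) : f b ∈ closedNbhd G C)⟩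
  set p := Nat.find hPne with hpdef
  set q := Nat.find hQne with hqdef
  have hfpN : f (a + (p : ZMod n)) ∈ closedNbhd G C := by
    have hprevC : f (a + ((p - 1 : ℕ) : ZMod n)) ∈ C := by
      rcases Nat.eq_or_lt_of_le hp0 with h | h
      · rw [show p - 1 = 0 from by omega]
        simpa using haC
      · exact hpmin (p - 1) (by omega) (by omega)
    have := hnext _ hprevC
    rw [show a + ((p - 1 : ℕ) : ZMod n) + 1 = a + (p : ZMod n) from by
      rw [add_assoc]
      congr 1
      rw [show (p : ℕ) = (p - 1) + 1 from by omega]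
      push_cast
      ring] at this
    exact this
  have hfqN : f (a - (q : ZMod n)) ∈ closedNbhd G C := by
    have hprevC : f (a - ((q - 1 : ℕ) : ZMod n)) ∈ C := by
      rcases Nat.eq_or_lt_of_le hq0 with h | h
      · rw [show q - 1 = 0 from by omega]
        simpa using haC
      · exact hqmin (q - 1) (by omega) (by omega)
    have := hprev _ hprevC
    rw [show a - ((q - 1 : ℕ) : ZMod n) - 1 = a - (q : ZMod n) from by
      rw [sub_sub]
      congr 1
      rw [show (q : ℕ) = (q - 1) + 1 from by omega]
      push_cast
      ring] at this
    exact this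
  have hfpnb : f (a + (p : ZMod n)) ∈ nbhd G C := by
    rcases hfpN with h | h
    · exact absurd h hpC
    · exact h
  have hfqnb : f (a - (q : ZMod n)) ∈ nbhd G C := by
    rcases hfqN with h | h
    · exact absurd h hqC
    · exact h
  have hplt : p < k₀ := by
    rcases Nat.eq_or_lt_of_le hple with h | h
    · exact absurd (h ▸ hfpN : f (a + (k₀ : ZMod n)) ∈ closedNbhd G C) (hfb₀ ▸ hbNC)
    · exact h
  have hqlt : q < k₁ := by
    rcases Nat.eq_or_lt_of_le hqle with h | h
    · exact absurd (h ▸ hfqN : f (a - (k₁ : ZMod n)) ∈ closedNbhd G C) (hfb₁ ▸ hbNC)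
    · exact h
  -- produce the chord
  refine ⟨a + (p : ZMod n), a - (q : ZMod n), ?_, ?_, ?_, ?_⟩
  · intro h
    have : ((p + q : ℕ) : ZMod n) = 0 := by
      push_cast
      linear_combination h - (a + a - a - a)
    have hdvd := (ZMod.natCast_eq_zero_iff _ _).mp this
    have := Nat.le_of_dvd (by omega) hdvd
    omega
  · intro h
    have : ((p + q + 1 : ℕ) : ZMod n) = 0 := by
      push_cast
      linear_combination -h + (a - a)
    have hdvd := (ZMod.natCast_eq_zero_iff _ _).mp this
    have := Nat.le_of_dvd (by omega) hdvd
    omega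
  · intro h
    have : ((p + q - 1 : ℕ) : ZMod n) = 0 := by
      rw [show p + q - 1 = (p + q) - 1 from rfl]
      rw [Nat.cast_sub (by omega)]
      push_cast
      linear_combination h - (a - a)
    have hdvd := (ZMod.natCast_eq_zero_iff _ _).mp this
    have := Nat.le_of_dvd (by omega) hdvd
    omega
  · exact h2 C hC _ hfpnb _ hfqnb (fun h => by
      have := hfinj h
      have h2' : ((p + q : ℕ) : ZMod n) = 0 := by
        push_cast
        linear_combination this - (a + a - a - a)
      have hdvd := (ZMod.natCast_eq_zero_iff _ _).mp h2'
      have := Nat.le_of_dvd (by omega) hdvd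
      omega)

end GlueChordal
section Glue

variable {G H : SimpleGraph V}

lemma cliqueOn_adj {Ω : Set V} {u v : V} :
    (cliqueOn Ω).Adj u v ↔ u ≠ v ∧ u ∈ Ω ∧ v ∈ Ω := Iff.rfl

lemma inducedOn_adj {A : Set V} {u v : V} :
    (inducedOn H A).Adj u v ↔ H.Adj u v ∧ u ∈ A ∧ v ∈ A := Iff.rfl

lemma realization_adj {C : Set V} {u v : V} :
    (realization G C).Adj u v ↔ u ≠ v ∧ u ∈ closedNbhd G C ∧ v ∈ closedNbhd G C ∧
      (G.Adj u v ∨ (u ∈ nbhd G C ∧ v ∈ nbhd G C)) := Iff.rfl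

lemma cliqueOn_le (hclique : H.IsClique Ω) : cliqueOn Ω ≤ H := by
  intro u v huv
  exact hclique huv.2.1 huv.2.2 huv.1

lemma inducedOn_le {A : Set V} : inducedOn H A ≤ H := fun _ _ h => h.1

lemma inducedOn_chordal {A : Set V} (hch : IsChordal H) : IsChordal (inducedOn H A) := by
  intro n hn f hinj hadj
  have hmem : ∀ i, f i ∈ A := fun i => (hadj i).2.1
  obtain ⟨i, j, h1, h2, h3, h4⟩ := hch n hn f hinj (fun i => (hadj i).1)
  exact ⟨i, j, h1, h2, h3, h4, hmem i, hmem j⟩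

lemma cliqueOn_nbhd_le_realization {C : Set V} :
    cliqueOn (nbhd G C) ≤ realization G C := by
  intro u v huv
  exact ⟨huv.1, Or.inr huv.2.1, Or.inr huv.2.2, Or.inr ⟨huv.2.1, huv.2.2⟩⟩

lemma realization_le_inducedOn {Ω C : Set V} (hC : IsCompOf G Ω C) (hGH : G ≤ H)
    (hclique : H.IsClique Ω) : realization G C ≤ inducedOn H (closedNbhd G C) := by
  intro u v huv
  obtain ⟨hne, hu, hv, hor⟩ := huv
  refine ⟨?_, hu, hv⟩
  rcases hor with h | ⟨h1, h2⟩
  · exact hGH h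
  · exact hclique (nbhd_subset_of_comp hC h1) (nbhd_subset_of_comp hC h2) hne

/-- the glue of a family of graphs over the components of `G \ Ω`. -/
def glueG (G : SimpleGraph V) (Ω : Set V) (K : Set V → SimpleGraph V) : SimpleGraph V :=
  cliqueOn Ω ⊔ ⨆ C ∈ {D : Set V | IsCompOf G Ω D}, K C

lemma glueG_adj {Ω : Set V} {K : Set V → SimpleGraph V} {u v : V} :
    (glueG G Ω K).Adj u v ↔
      (cliqueOn Ω).Adj u v ∨ ∃ C, IsCompOf G Ω C ∧ (K C).Adj u v := by
  rw [glueG, SimpleGraph.sup_adj]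
  apply or_congr Iff.rfl
  constructor
  · intro h
    rw [SimpleGraph.iSup_adj] at h
    obtain ⟨C, hC⟩ := h
    rw [SimpleGraph.iSup_adj] at hC
    obtain ⟨hC', h⟩ := hC
    exact ⟨C, hC', h⟩
  · intro ⟨C, hC', h⟩
    rw [SimpleGraph.iSup_adj]
    refine ⟨C, ?_⟩
    rw [SimpleGraph.iSup_adj]
    exact ⟨hC', h⟩

lemma cliqueOn_le_glueG {Ω : Set V} {K : Set V → SimpleGraph V} :
    cliqueOn Ω ≤ glueG G Ω K := le_sup_left

lemma le_glueG_of_comp {Ω C : Set V} {K : Set V → SimpleGraph V} (hC : IsCompOf G Ω C) :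
    K C ≤ glueG G Ω K := by
  intro u v h
  rw [glueG_adj]
  exact Or.inr ⟨C, hC, h⟩

lemma glueG_adj_at_comp {Ω C : Set V} {K : Set V → SimpleGraph V}
    (hwithin : ∀ D, IsCompOf G Ω D → edgesWithin (K D) (closedNbhd G D))
    (hC : IsCompOf G Ω C) {u v : V} (hu : u ∈ C) (h : (glueG G Ω K).Adj u v) :
    (K C).Adj u v := by
  rw [glueG_adj] at h
  rcases h with h | ⟨D, hD, h⟩
  · exact absurd h.2.1 (hC.not_mem_X hu)
  · have huD : u ∈ closedNbhd G D := (hwithin D hD u v h).1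
    have : u ∈ D := by
      rcases huD with h' | h'
      · exact h'
      · exact absurd (nbhd_subset_of_comp hD h') (hC.not_mem_X hu)
    rwa [comp_eq_of_inter hC hD ⟨u, hu, this⟩]

lemma glueG_adj_within {Ω C : Set V} {K : Set V → SimpleGraph V}
    (hwithin : ∀ D, IsCompOf G Ω D → edgesWithin (K D) (closedNbhd G D))
    (hC : IsCompOf G Ω C) {u v : V} (hu : u ∈ closedNbhd G C) (hv : v ∈ closedNbhd G C)
    (h : (glueG G Ω K).Adj u v) :
    (K C).Adj u v ∨ (u ≠ v ∧ u ∈ nbhd G C ∧ v ∈ nbhd G C) := by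
  rw [glueG_adj] at h
  rcases h with h | ⟨D, hD, h⟩
  · exact Or.inr ⟨h.1, omega_inter_closedNbhd hC ⟨h.2.1, hu⟩,
      omega_inter_closedNbhd hC ⟨h.2.2, hv⟩⟩
  · by_cases hDC : D = C
    · exact Or.inl (hDC ▸ h)
    · have h1 := (hwithin D hD u v h).1
      have h2 := (hwithin D hD u v h).2
      have hne : C ≠ D := fun hh => hDC hh.symm
      exact Or.inr ⟨h.ne, (closedNbhd_inter_comps hC hD hne ⟨hu, h1⟩).1,
        (closedNbhd_inter_comps hC hD hne ⟨hv, h2⟩).1⟩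

lemma glueG_ge {Ω : Set V} {K : Set V → SimpleGraph V}
    (hreal : ∀ C, IsCompOf G Ω C → realization G C ≤ K C) : G ≤ glueG G Ω K := by
  intro u v huv
  rw [glueG_adj]
  by_cases hu : u ∈ Ω <;> by_cases hv : v ∈ Ω
  · exact Or.inl ⟨huv.ne, hu, hv⟩
  · -- v outside Ω
    obtain ⟨C, hC, hvC⟩ := comp_exists (G := G) hv
    refine Or.inr ⟨C, hC, hreal C hC ?_⟩
    refine ⟨huv.ne, Or.inr ⟨?_, v, hvC, huv.symm⟩, Or.inl hvC, Or.inl huv⟩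
    exact fun h => hC.not_mem_X h hu
  · obtain ⟨C, hC, huC⟩ := comp_exists (G := G) hu
    refine Or.inr ⟨C, hC, hreal C hC ?_⟩
    refine ⟨huv.ne, Or.inl huC, Or.inr ⟨?_, u, huC, huv⟩, Or.inl huv⟩
    exact fun h => hC.not_mem_X h hv
  · obtain ⟨C, hC, huC⟩ := comp_exists (G := G) hu
    have hvC : v ∈ C := hC.closed u huC v hv huv
    exact Or.inr ⟨C, hC, hreal C hC ⟨huv.ne, Or.inl huC, Or.inl hvC, Or.inl huv⟩⟩

lemma glueG_chordal {Ω : Set V} {K : Set V → SimpleGraph V}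
    (hwithin : ∀ D, IsCompOf G Ω D → edgesWithin (K D) (closedNbhd G D))
    (hch : ∀ D, IsCompOf G Ω D → IsChordal (K D))
    (hnb : ∀ D, IsCompOf G Ω D → cliqueOn (nbhd G D) ≤ K D) :
    IsChordal (glueG G Ω K) := by
  apply glue_chordal_abstract (G := G) (Ω := Ω)
  · intro u v h
    rw [glueG_adj] at h
    rcases h with h | ⟨C, hC, h⟩
    · exact Or.inl ⟨h.2.1, h.2.2⟩
    · exact Or.inr ⟨C, hC, (hwithin C hC u v h).1, (hwithin C hC u v h).2⟩
  · intro C hC x hx y hy hxy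
    exact cliqueOn_le_glueG ⟨hxy, nbhd_subset_of_comp hC hx, nbhd_subset_of_comp hC hy⟩
  · intro n hn f hinj hadj hmem
    haveI : NeZero n := ⟨by omega⟩
    have h2 : ((2 : ℕ) : ZMod n) ≠ 0 := by
      rw [Ne, ZMod.natCast_eq_zero_iff]
      intro h
      have := Nat.le_of_dvd (by omega) h
      omega
    have h3 : ((3 : ℕ) : ZMod n) ≠ 0 := by
      rw [Ne, ZMod.natCast_eq_zero_iff]
      intro h
      have := Nat.le_of_dvd (by omega) h
      omega
    have h1 : ((1 : ℕ) : ZMod n) ≠ 0 := by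
      rw [Ne, ZMod.natCast_eq_zero_iff]
      intro h
      have := Nat.le_of_dvd (by omega) h
      omega
    refine ⟨0, 2, ?_, ?_, ?_, ?_⟩
    · intro h
      apply h2
      push_cast
      exact h.symm
    · intro h
      apply h1
      push_cast
      linear_combination h
    · intro h
      apply h3
      push_cast
      linear_combination -h
    · refine cliqueOn_le_glueG ⟨?_, hmem 0, hmem 2⟩
      intro h
      have h' := hinj h
      apply h2
      push_cast
      linear_combination -h'
  · intro C hC n hn f hinj hadj hmem
    have hKcyc : ∀ i, (K C).Adj (f i) (f (i + 1)) := by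
      intro i
      rcases glueG_adj_within hwithin hC (hmem i) (hmem (i+1)) (hadj i) with h | ⟨h1, h2, h3⟩
      · exact h
      · exact hnb C hC ⟨h1, h2, h3⟩
    obtain ⟨i, j, hij, hji, hij1, hadj'⟩ := hch C hC n hn f hinj hKcyc
    exact ⟨i, j, hij, hji, hij1, le_glueG_of_comp hC hadj'⟩

end Glue
section Decomp

variable {G H : SimpleGraph V} {Ω : Set V}

lemma exists_maxclique_ext [Fintype V] {S : Set V} (hS : H.IsClique S) :
    ∃ Ω : Set V, S ⊆ Ω ∧ IsMaxClique H Ω := by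
  classical
  set T := {T : Set V | H.IsClique T ∧ S ⊆ T} with hT
  have hfin : T.Finite := Set.toFinite _
  have hne : T.Nonempty := ⟨S, hS, subset_rfl⟩
  obtain ⟨Ω, hΩT, hmax⟩ := Set.Finite.exists_maximalFor (fun T => T.ncard) T hfin hne
  refine ⟨Ω, hΩT.2, hΩT.1, ?_⟩
  intro Ω' hΩ' hsub
  have hΩ'T : Ω' ∈ T := ⟨hΩ', hΩT.2.trans hsub⟩
  have hcard := Set.ncard_le_ncard hsub (Set.toFinite _)
  have heq := hmax hΩ'T hcard
  exact (Set.eq_of_subset_of_ncard_le hsub heq (Set.toFinite _)).symm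

lemma minTri_decomp (hH : IsMinTri G H) (hclique : H.IsClique Ω) :
    H = glueG G Ω (fun C => inducedOn H (closedNbhd G C)) := by
  have hwithin : ∀ D, IsCompOf G Ω D →
      edgesWithin (inducedOn H (closedNbhd G D)) (closedNbhd G D) := by
    intro D _ u v h
    exact ⟨h.2.1, h.2.2⟩
  have hle : glueG G Ω (fun C => inducedOn H (closedNbhd G C)) ≤ H :=
    sup_le (cliqueOn_le hclique) (iSup_le fun C => iSup_le fun _ => inducedOn_le)
  have hge : G ≤ glueG G Ω (fun C => inducedOn H (closedNbhd G C)) :=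
    glueG_ge (fun C hC => realization_le_inducedOn hC hH.1.2 hclique)
  have hch : IsChordal (glueG G Ω (fun C => inducedOn H (closedNbhd G C))) :=
    glueG_chordal hwithin (fun D _ => inducedOn_chordal hH.1.1)
      (fun D hD => le_trans cliqueOn_nbhd_le_realization
        (realization_le_inducedOn hD hH.1.2 hclique))
  exact (hH.2 _ ⟨hch, hge⟩ hle).symm

lemma minTri_edge_comp (hH : IsMinTri G H) (hclique : H.IsClique Ω) {C : Set V}
    (hC : IsCompOf G Ω C) {u v : V} (hu : u ∈ C) (huv : H.Adj u v) :
    v ∈ closedNbhd G C := by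
  have hdec := minTri_decomp hH hclique
  rw [hdec] at huv
  have := glueG_adj_at_comp (by intro D _ u v h; exact ⟨h.2.1, h.2.2⟩ :
    ∀ D, IsCompOf G Ω D → edgesWithin (inducedOn H (closedNbhd G D)) (closedNbhd G D))
    hC hu huv
  exact this.2.2

lemma minTri_comp_minTriOn (hH : IsMinTri G H) (hclique : H.IsClique Ω) {C : Set V}
    (hC : IsCompOf G Ω C) :
    IsMinTriOn (realization G C) (closedNbhd G C) (inducedOn H (closedNbhd G C)) := by
  classical
  refine ⟨⟨inducedOn_chordal hH.1.1, realization_le_inducedOn hC hH.1.2 hclique,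
    by intro u v h; exact ⟨h.2.1, h.2.2⟩⟩, ?_⟩
  intro K' ⟨hK'ch, hK'ge, hK'within⟩ hK'le
  set KK := fun D => if D = C then K' else inducedOn H (closedNbhd G D) with hKK
  have hKKC : KK C = K' := if_pos rfl
  have hwithin' : ∀ D, IsCompOf G Ω D → edgesWithin (KK D) (closedNbhd G D) := by
    intro D hD u v h
    by_cases hDC : D = C
    · simp only [hKK] at h; rw [if_pos hDC] at h
      subst hDC
      exact hK'within u v h
    · simp only [hKK] at h; rw [if_neg hDC] at h
      exact ⟨h.2.1, h.2.2⟩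
  have hch' : ∀ D, IsCompOf G Ω D → IsChordal (KK D) := by
    intro D hD
    by_cases hDC : D = C
    · simp only [hKK]; rw [if_pos hDC]; exact hK'ch
    · simp only [hKK]; rw [if_neg hDC]; exact inducedOn_chordal hH.1.1
  have hreal' : ∀ D, IsCompOf G Ω D → realization G D ≤ KK D := by
    intro D hD
    by_cases hDC : D = C
    · simp only [hKK]; rw [if_pos hDC]; subst hDC; exact hK'ge
    · simp only [hKK]; rw [if_neg hDC]; exact realization_le_inducedOn hD hH.1.2 hclique
  have hnb' : ∀ D, IsCompOf G Ω D → cliqueOn (nbhd G D) ≤ KK D :=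
    fun D hD => le_trans cliqueOn_nbhd_le_realization (hreal' D hD)
  have hle' : glueG G Ω KK ≤ H := by
    refine sup_le (cliqueOn_le hclique) (iSup_le fun D => iSup_le fun _ => ?_)
    by_cases hDC : D = C
    · simp only [hKK, if_pos hDC]
      exact le_trans hK'le inducedOn_le
    · simp only [hKK, if_neg hDC]
      exact inducedOn_le
  have heq : glueG G Ω KK = H :=
    hH.2 _ ⟨glueG_chordal hwithin' hch' hnb', glueG_ge hreal'⟩ hle'
  refine le_antisymm hK'le ?_
  intro u v h
  obtain ⟨hadj, hu, hv⟩ := h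
  rw [← heq] at hadj
  rcases glueG_adj_within hwithin' hC hu hv hadj with h | ⟨hne, h1, h2⟩
  · rwa [hKKC] at h
  · exact hK'ge (cliqueOn_nbhd_le_realization ⟨hne, h1, h2⟩)

end Decomp
section PMCFacts

variable {G : SimpleGraph V} {Ω : Set V}

lemma pmc_no_full_comp [Fintype V] (hPMC : IsPMC G Ω) {C : Set V} (hC : IsCompOf G Ω C) :
    nbhd G C ≠ Ω := by
  obtain ⟨H₀, hH₀, hcl, hmax⟩ := hPMC
  intro hfull
  obtain ⟨c, hcC, hcadj⟩ := clique_attach (G := G) hH₀.1.1 hH₀.1.2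
    (hC.disjoint.symm)
    (fun s hs s' hs' hne => hcl hs hs' hne)
    hC.connected
    (fun s hs => by
      rw [← hfull] at hs
      obtain ⟨hsC, w, hwC, hadj⟩ := hs
      exact ⟨w, hwC, hadj.symm⟩)
  have hclique' : H₀.IsClique (insert c Ω) := by
    apply SimpleGraph.IsClique.insert hcl
    intro b hb hbc
    exact hcadj b hb
  have heq := hmax (insert c Ω) hclique' (Set.subset_insert c Ω)
  have : c ∈ Ω := heq ▸ Set.mem_insert c Ω
  exact hC.not_mem_X hcC this

lemma pmc_cliquish [Fintype V] (hPMC : IsPMC G Ω) {u v : V} (hu : u ∈ Ω) (hv : v ∈ Ω)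
    (hne : u ≠ v) (hnadj : ¬G.Adj u v) :
    ∃ C, IsCompOf G Ω C ∧ u ∈ nbhd G C ∧ v ∈ nbhd G C := by
  classical
  obtain ⟨H₀, hH₀, hcl, hmax⟩ := hPMC
  by_contra hno
  push_neg at hno
  have hdec := minTri_decomp hH₀ hcl
  have huv : H₀.Adj u v := hcl hu hv hne
  set H₁ := H₀.deleteEdges {s(u, v)} with hH₁
  have hH₁adj : ∀ a b, H₁.Adj a b ↔ H₀.Adj a b ∧ ¬((a = u ∧ b = v) ∨ (a = v ∧ b = u)) := by
    intro a b
    rw [hH₁, SimpleGraph.deleteEdges_adj, Set.mem_singleton_iff, Sym2.eq_iff]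
  have hnotpair : ∀ C, IsCompOf G Ω C → ∀ a b, a ∈ nbhd G C → b ∈ nbhd G C →
      ¬((a = u ∧ b = v) ∨ (a = v ∧ b = u)) := by
    rintro C hC a b ha hb (⟨h1, h2⟩ | ⟨h1, h2⟩)
    · exact hno C hC (h1 ▸ ha) (h2 ▸ hb)
    · exact hno C hC (h2 ▸ hb) (h1 ▸ ha)
  have hedge : ∀ a b, H₁.Adj a b → (a ∈ Ω ∧ b ∈ Ω) ∨
      ∃ C, IsCompOf G Ω C ∧ a ∈ closedNbhd G C ∧ b ∈ closedNbhd G C := by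
    intro a b h
    have h0 : H₀.Adj a b := ((hH₁adj a b).mp h).1
    rw [hdec, glueG_adj] at h0
    rcases h0 with h0 | ⟨C, hC, h0⟩
    · exact Or.inl ⟨h0.2.1, h0.2.2⟩
    · exact Or.inr ⟨C, hC, h0.2.1, h0.2.2⟩
  have hch₁ : IsChordal H₁ := by
    apply glue_chordal_abstract (G := G) (Ω := Ω) hedge
    · -- h2 : neighborhoods are cliques in H₁
      intro C hC x hx y hy hxy
      rw [hH₁adj]
      refine ⟨hcl (nbhd_subset_of_comp hC hx) (nbhd_subset_of_comp hC hy) hxy, ?_⟩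
      exact hnotpair C hC x y hx hy
    · -- h3 : cycles within Ω
      intro n hn f hinj hadj hmem
      haveI : NeZero n := ⟨by omega⟩
      have hnz : ∀ m : ℕ, 0 < m → m < n → ((m : ℕ) : ZMod n) ≠ 0 := by
        intro m h1 h2
        rw [Ne, ZMod.natCast_eq_zero_iff]
        intro h
        have := Nat.le_of_dvd (by omega) h
        omega
      have hinj' : ∀ (i j : ZMod n), f i = f j → i = j := fun i j h => hinj h
      have hfne : ∀ a b : ℕ, 0 < b - a → b - a < n → f a ≠ f b := by
        intro a b h1 h2 heq
        have := hinj' _ _ heq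
        have h3 : ((b - a : ℕ) : ZMod n) = 0 := by
          rw [Nat.cast_sub (by omega)]
          rw [this]
          ring
        exact hnz (b - a) h1 h2 h3
      have hcond : ∀ i : ZMod n, i ≠ i + 2 ∧ (i + 2) ≠ i + 1 ∧ i ≠ (i + 2) + 1 := by
        intro i
        refine ⟨?_, ?_, ?_⟩
        · intro h
          have : ((2 : ℕ) : ZMod n) = 0 := by push_cast; linear_combination -h
          exact hnz 2 (by omega) (by omega) this
        · intro h
          have : ((1 : ℕ) : ZMod n) = 0 := by push_cast; linear_combination h
          exact hnz 1 (by omega) (by omega) this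
        · intro h
          have : ((3 : ℕ) : ZMod n) = 0 := by push_cast; linear_combination -h
          exact hnz 3 (by omega) (by omega) this
      have hmkadj : ∀ i j : ZMod n, i ≠ j → ¬((f i = u ∧ f j = v) ∨ (f i = v ∧ f j = u)) →
          H₁.Adj (f i) (f j) := by
        intro i j hij hnp
        rw [hH₁adj]
        exact ⟨hcl (hmem i) (hmem j) (fun h => hij (hinj' _ _ h)), hnp⟩
      by_cases h02 : (f 0 = u ∧ f 2 = v) ∨ (f 0 = v ∧ f 2 = u)
      · -- use the chord (1, 3)
        have d01 : f 0 ≠ f 1 := by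
          have := hfne 0 1 (by omega) (by omega); push_cast at this; exact this
        have d12 : f 1 ≠ f 2 := by
          have := hfne 1 2 (by omega) (by omega); push_cast at this; exact this
        have h13 : ¬((f 1 = u ∧ f 3 = v) ∨ (f 1 = v ∧ f 3 = u)) := by
          rcases h02 with ⟨ha, hb⟩ | ⟨ha, hb⟩
          · rintro (⟨hc, hd⟩ | ⟨hc, hd⟩)
            · exact d01 (ha.trans hc.symm)
            · exact d12 (hc.trans hb.symm)
          · rintro (⟨hc, hd⟩ | ⟨hc, hd⟩)
            · exact d12 (hc.trans hb.symm)
            · exact d01 (ha.trans hc.symm)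
        have hcnd := hcond 1
        rw [show (1 + 2 : ZMod n) = 3 from by norm_num] at hcnd
        exact ⟨1, 3, hcnd.1, hcnd.2.1, hcnd.2.2, hmkadj 1 3 hcnd.1 h13⟩
      · have hcnd := hcond 0
        rw [show (0 + 2 : ZMod n) = 2 from by norm_num] at hcnd
        exact ⟨0, 2, hcnd.1, hcnd.2.1, hcnd.2.2, hmkadj 0 2 hcnd.1 h02⟩
    · -- h4 : cycles within a closed neighborhood
      intro C hC n hn f hinj hadj hmem
      have hcyc : ∀ i, (inducedOn H₀ (closedNbhd G C)).Adj (f i) (f (i + 1)) := by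
        intro i
        exact ⟨((hH₁adj _ _).mp (hadj i)).1, hmem i, hmem (i + 1)⟩
      obtain ⟨i, j, h1, h2, h3, h4⟩ :=
        inducedOn_chordal (A := closedNbhd G C) hH₀.1.1 n hn f hinj hcyc
      refine ⟨i, j, h1, h2, h3, ?_⟩
      rw [hH₁adj]
      refine ⟨h4.1, ?_⟩
      rintro (⟨ha, hb⟩ | ⟨ha, hb⟩)
      · exact hno C hC (omega_inter_closedNbhd hC ⟨hu, ha ▸ h4.2.1⟩)
          (omega_inter_closedNbhd hC ⟨hv, hb ▸ h4.2.2⟩)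
      · exact hno C hC (omega_inter_closedNbhd hC ⟨hu, hb ▸ h4.2.2⟩)
          (omega_inter_closedNbhd hC ⟨hv, ha ▸ h4.2.1⟩)
  -- H₁ is a triangulation of G strictly below H₀ : contradiction
  have hGle : G ≤ H₁ := by
    intro a b h
    rw [hH₁adj]
    refine ⟨hH₀.1.2 h, ?_⟩
    rintro (⟨ha, hb⟩ | ⟨ha, hb⟩)
    · exact hnadj (ha ▸ hb ▸ h)
    · exact hnadj (ha ▸ hb ▸ h.symm)
  have hle : H₁ ≤ H₀ := fun a b h => ((hH₁adj a b).mp h).1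
  have heq := hH₀.2 H₁ ⟨hch₁, hGle⟩ hle
  have : H₁.Adj u v := heq ▸ huv
  rw [hH₁adj] at this
  exact this.2 (Or.inl ⟨rfl, rfl⟩)

lemma pmc_second_full [Fintype V] (hPMC : IsPMC G Ω) {C : Set V} (hC : IsCompOf G Ω C) :
    ∃ D, IsCompOf G (nbhd G C) D ∧ nbhd G D = nbhd G C ∧ D ≠ C := by
  classical
  set S := nbhd G C with hSdef
  have hSsub : S ⊆ Ω := nbhd_subset_of_comp hC
  have hnsub : ¬Ω ⊆ S := fun h => pmc_no_full_comp hPMC hC (Set.Subset.antisymm hSsub h)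
  obtain ⟨u, huΩ, huS⟩ := Set.not_subset.mp hnsub
  obtain ⟨D, hD, huD⟩ := comp_exists (G := G) (X := S) huS
  have hsubD : ∀ C', IsCompOf G Ω C' → u ∈ nbhd G C' → C' ⊆ D := by
    intro C' hC' hu'
    have hC'S : Disjoint C' S := Set.disjoint_left.mpr
      (fun a ha haS => hC'.not_mem_X ha (hSsub haS))
    obtain ⟨huC', w, hwC', hwadj⟩ := hu'
    have hwD : w ∈ D := hD.closed u huD w (fun h => Set.disjoint_left.mp hC'S hwC' h) hwadj.symm
    exact subset_comp_of_connected hD hC'.connected hC'S ⟨w, hwC', hwD⟩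
  have keyΩ : ∀ v, v ∈ Ω → v ∉ S → v ∈ D := by
    intro v hvΩ hvS
    by_cases huv : v = u
    · exact huv ▸ huD
    by_cases hGuv : G.Adj u v
    · exact hD.closed u huD v hvS hGuv
    · obtain ⟨C', hC', hu', hv'⟩ := pmc_cliquish hPMC huΩ hvΩ (Ne.symm huv) hGuv
      obtain ⟨hvC', w', hw'C', hw'adj⟩ := hv'
      exact hD.closed w' (hsubD C' hC' hu' hw'C') v hvS hw'adj
  have hfullD : nbhd G D = S := by
    apply Set.Subset.antisymm
    · intro x hx
      obtain ⟨hxD, w, hwD, hadj⟩ := hx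
      by_contra hxS
      exact hxD (hD.closed w hwD x hxS hadj)
    · intro s hsS
      have hsΩ : s ∈ Ω := hSsub hsS
      have hsD : s ∉ D := fun h => Set.disjoint_left.mp hD.disjoint h hsS
      by_cases hGsu : G.Adj s u
      · exact ⟨hsD, u, huD, hGsu.symm⟩
      · have hsu : s ≠ u := fun h => huS (h ▸ hsS)
        obtain ⟨C'', hC'', hs'', hu''⟩ := pmc_cliquish hPMC hsΩ huΩ hsu
          (fun h => hGsu h)
        obtain ⟨hsC'', w'', hw''C'', hw''adj⟩ := hs''
        exact ⟨hsD, w'', hsubD C'' hC'' hu'' hw''C'', hw''adj⟩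
  refine ⟨D, hD, hfullD, ?_⟩
  intro h
  exact hC.not_mem_X (h ▸ huD) huΩ

end PMCFacts
section Centroid

variable {G H : SimpleGraph V} {W : Finset (Set V)}

lemma meeting_mono {C D : Set V} (h : D ⊆ C) : meeting W D ⊆ meeting W C := by
  intro K hK
  rw [meeting, Finset.mem_filter] at hK ⊢
  obtain ⟨hKW, x, hx⟩ := hK
  exact ⟨hKW, x, hx.1, h hx.2⟩

lemma meeting_card_le : (meeting W C).card ≤ W.card := Finset.card_filter_le _ _

lemma meeting_disjoint (hW : IsECC G W) {C D : Set V} (hDC : Disjoint D C)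
    (hDN : Disjoint D (nbhd G C)) : Disjoint (meeting W D) (meeting W C) := by
  rw [Finset.disjoint_left]
  intro K hKD hKC
  rw [meeting, Finset.mem_filter] at hKD hKC
  obtain ⟨hKW, d, hdK, hdD⟩ := hKD
  obtain ⟨_, c, hcK, hcC⟩ := hKC
  have hdc : d ≠ c := fun h => Set.disjoint_left.mp hDC hdD (h ▸ hcC)
  have hadj : G.Adj c d := hW.1 K hKW hcK hdK (Ne.symm hdc)
  have hdnC : d ∉ C := fun h => Set.disjoint_left.mp hDC hdD h
  exact Set.disjoint_left.mp hDN hdD ⟨hdnC, c, hcC, hadj⟩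

lemma balanced_maxclique [Fintype V] (hH : IsMinTri G H) (hW : IsECC G W) :
    ∃ Ω : Set V, IsMaxClique H Ω ∧
      ∀ C, IsCompOf G Ω C → 2 * (meeting W C).card ≤ W.card := by
  classical
  set KV := Fintype.card V + 1 with hKV
  set μ := fun C : Set V => (meeting W C).card * KV + C.ncard with hμ
  have key : ∀ N : ℕ, ∀ Ω : Set V, IsMaxClique H Ω →
      (∀ C, IsCompOf G Ω C → W.card < 2 * (meeting W C).card → μ C < N) →
      ∃ Ω' : Set V, IsMaxClique H Ω' ∧
        ∀ C, IsCompOf G Ω' C → 2 * (meeting W C).card ≤ W.card := by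
    intro N
    induction N with
    | zero =>
        intro Ω hΩ hsmall
        refine ⟨Ω, hΩ, ?_⟩
        intro C hC
        by_contra h
        exact absurd (hsmall C hC (by omega)) (by omega)
    | succ N ih =>
        intro Ω hΩ hsmall
        by_cases hbal : ∀ C, IsCompOf G Ω C → 2 * (meeting W C).card ≤ W.card
        · exact ⟨Ω, hΩ, hbal⟩
        push_neg at hbal
        obtain ⟨C, hC, hheavy⟩ := hbal
        set S := nbhd G C with hSdef
        have hSsub : S ⊆ Ω := nbhd_subset_of_comp hC
        have hSclique : H.IsClique S := hΩ.1.subset hSsub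
        obtain ⟨c, hcC, hcadj⟩ := clique_attach (G := G) hH.1.1 hH.1.2
          (Set.disjoint_left.mpr (fun a ha haC => ha.1 haC))
          (fun s hs s' hs' hne => hSclique hs hs' hne)
          hC.connected
          (fun s hs => by
            obtain ⟨hsC, w, hwC, hadj⟩ := hs
            exact ⟨w, hwC, hadj.symm⟩)
        have hclq : H.IsClique (insert c S) := by
          apply SimpleGraph.IsClique.insert hSclique
          intro b hb _
          exact hcadj b hb
        obtain ⟨Ω', hsub', hΩ'⟩ := exists_maxclique_ext hclq
        have hcΩ' : c ∈ Ω' := hsub' (Set.mem_insert c S)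
        have hSΩ' : S ⊆ Ω' := fun s hs => hsub' (Set.mem_insert_of_mem c hs)
        have hΩ'sub : Ω' ⊆ closedNbhd G C := by
          intro w hw
          by_cases hwc : w = c
          · exact hwc ▸ Or.inl hcC
          · have hadj : H.Adj c w := hΩ'.1 hcΩ' hw (fun h => hwc h.symm)
            exact minTri_edge_comp hH hΩ.1 hC hcC hadj
        have hCcompS : IsCompOf G S C := comp_of_nbhd hC
        apply ih Ω' hΩ'
        intro D hD hheavyD
        have hDdisjS : Disjoint D S := Set.disjoint_of_subset_right hSΩ' hD.disjoint
        by_cases hDC : (D ∩ C).Nonempty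
        · -- D is strictly inside C
          have hDsubC : D ⊆ C := subset_comp_of_connected hCcompS hD.connected hDdisjS hDC
          have hcD : c ∉ D := fun h => Set.disjoint_left.mp hD.disjoint h hcΩ'
          have hss : D ⊂ C := ⟨hDsubC, fun h => hcD (h hcC)⟩
          have hncard : D.ncard < C.ncard := Set.ncard_lt_ncard hss (Set.toFinite C)
          have hmle : (meeting W D).card ≤ (meeting W C).card :=
            Finset.card_le_card (meeting_mono hDsubC)
          have hmul : (meeting W D).card * KV ≤ (meeting W C).card * KV :=
            Nat.mul_le_mul_right KV hmle
          have hμC := hsmall C hC hheavy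
          rw [hμ] at hμC ⊢
          simp only at hμC ⊢
          omega
        · -- D is away from C : it cannot be heavy
          exfalso
          have hDdisjC : Disjoint D C := by
            rw [Set.disjoint_iff_inter_eq_empty]
            exact Set.not_nonempty_iff_eq_empty.mp hDC
          have hdisj := meeting_disjoint hW hDdisjC hDdisjS
          have hcard : (meeting W D).card + (meeting W C).card ≤ W.card := by
            rw [← Finset.card_union_of_disjoint hdisj]
            apply Finset.card_le_card
            exact Finset.union_subset (Finset.filter_subset _ _) (Finset.filter_subset _ _)
          omega
  obtain ⟨Ω₀, hsub₀, hΩ₀⟩ := exists_maxclique_ext (S := (∅ : Set V))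
    (by simp [SimpleGraph.isClique_iff, Set.pairwise_empty])
  apply key (W.card * KV + Fintype.card V + 1) Ω₀ hΩ₀
  intro C hC _
  have h1 : (meeting W C).card ≤ W.card := meeting_card_le
  have h2 : C.ncard ≤ Fintype.card V := by
    have := Set.ncard_le_ncard (Set.subset_univ C) (Set.toFinite _)
    rwa [Set.ncard_univ, Nat.card_eq_fintype_card] at this
  have h3 : (meeting W C).card * KV ≤ W.card * KV := Nat.mul_le_mul_right KV h1
  rw [hμ]
  simp only
  omega

end Centroid
section Main

variable {G : SimpleGraph V} {Ω : Set V}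

lemma glue_isMinTri [Fintype V] (hPMC : IsPMC G Ω) {F : Set V → SimpleGraph V}
    (hF : ∀ C, IsCompOf G Ω C → IsMinTriOn (realization G C) (closedNbhd G C) (F C)) :
    IsMinTri G (glueG G Ω F) := by
  have hwithin : ∀ D, IsCompOf G Ω D → edgesWithin (F D) (closedNbhd G D) :=
    fun D hD => (hF D hD).1.2.2
  have hreal : ∀ D, IsCompOf G Ω D → realization G D ≤ F D :=
    fun D hD => (hF D hD).1.2.1
  have hnb : ∀ D, IsCompOf G Ω D → cliqueOn (nbhd G D) ≤ F D :=
    fun D hD => le_trans cliqueOn_nbhd_le_realization (hreal D hD)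
  have hch : IsChordal (glueG G Ω F) :=
    glueG_chordal hwithin (fun D hD => (hF D hD).1.1) hnb
  have hge : G ≤ glueG G Ω F := glueG_ge hreal
  refine ⟨⟨hch, hge⟩, ?_⟩
  intro H' ⟨hH'ch, hH'ge⟩ hH'le
  -- Step 1: neighborhoods of components are cliques in H'
  have step1 : ∀ C, IsCompOf G Ω C → ∀ x ∈ nbhd G C, ∀ y ∈ nbhd G C, x ≠ y →
      H'.Adj x y := by
    intro C hC x hx y hy hxy
    obtain ⟨D, hD, hfull, hDC⟩ := pmc_second_full hPMC hC
    have hCfull : IsCompOf G (nbhd G C) C := comp_of_nbhd hC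
    have hCD : Disjoint C D := comp_disjoint hCfull hD (fun h => hDC h.symm)
    refine sep_clique hH'ch hH'ge hxy hC.connected hD.connected hCD ?_ ?_ ?_ ?_ ?_
    · -- no H'-edges between C and D
      intro c hcC d hdD hadj
      have hHadj := hH'le hadj
      have hFC := glueG_adj_at_comp hwithin hC hcC hHadj
      have hdN := (hwithin C hC c d hFC).2
      rcases hdN with h | h
      · exact Set.disjoint_left.mp hCD h hdD
      · exact Set.disjoint_left.mp hD.disjoint hdD h
    · obtain ⟨hxC, w, hwC, hadj⟩ := hx
      exact ⟨w, hwC, hadj.symm⟩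
    · obtain ⟨hyC, w, hwC, hadj⟩ := hy
      exact ⟨w, hwC, hadj.symm⟩
    · have hx' : x ∈ nbhd G D := hfull.symm ▸ hx
      obtain ⟨hxD, w, hwD, hadj⟩ := hx'
      exact ⟨w, hwD, hadj.symm⟩
    · have hy' : y ∈ nbhd G D := hfull.symm ▸ hy
      obtain ⟨hyD, w, hwD, hadj⟩ := hy'
      exact ⟨w, hwD, hadj.symm⟩
  -- Step 2: Ω is a clique in H'
  have step2 : ∀ u ∈ Ω, ∀ v ∈ Ω, u ≠ v → H'.Adj u v := by
    intro u hu v hv huv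
    by_cases hG : G.Adj u v
    · exact hH'ge hG
    · obtain ⟨C, hC, hu', hv'⟩ := pmc_cliquish hPMC hu hv huv hG
      exact step1 C hC u hu' v hv' huv
  -- Step 3: each F C is below H'
  have step3 : ∀ C, IsCompOf G Ω C → F C ≤ H' := by
    intro C hC
    set K := inducedOn H' (closedNbhd G C) with hK
    have hKle : K ≤ F C := by
      intro u v h
      obtain ⟨hadj', hu, hv⟩ := h
      have hHadj := hH'le hadj'
      rcases glueG_adj_within hwithin hC hu hv hHadj with h | ⟨hne, h1, h2⟩
      · exact h
      · exact hnb C hC ⟨hne, h1, h2⟩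
    have hKtri : IsTriOn (realization G C) (closedNbhd G C) K := by
      refine ⟨inducedOn_chordal hH'ch, ?_, by intro u v h; exact ⟨h.2.1, h.2.2⟩⟩
      intro u v h
      obtain ⟨hne, hu, hv, hor⟩ := h
      rcases hor with h | ⟨h1, h2⟩
      · exact ⟨hH'ge h, hu, hv⟩
      · exact ⟨step1 C hC u h1 v h2 hne, hu, hv⟩
    have heq := (hF C hC).2 K hKtri hKle
    rw [← heq]
    exact inducedOn_le
  have hle2 : glueG G Ω F ≤ H' := by
    refine sup_le (cliqueOn_le ?_) (iSup_le fun C => iSup_le fun hC => step3 C hC)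
    intro a ha b hb hab
    exact step2 a ha b hb hab
  exact le_antisymm hH'le hle2

end Main
/-- `H` is a minimal triangulation of `G` iff it is assembled from a PMC
`Ω` whose components `Ci` all satisfy `|W[Ci]| ≤ |W| / 2` together with minimal
triangulations of the realizations `R(Ci)`. -/
theorem min_tri_characterization {V : Type*} [Fintype V]
    (G : SimpleGraph V) (hG : G.Connected) (W : Finset (Set V)) (hW : IsECC G W)
    (H : SimpleGraph V) :
    IsMinTri G H ↔
      ∃ Ω : Set V, IsPMC G Ω ∧
        (∀ Ci : Set V, IsCompOf G Ω Ci → 2 * (meeting W Ci).card ≤ W.card) ∧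
        ∃ F : Set V → SimpleGraph V,
          (∀ Ci : Set V, IsCompOf G Ω Ci →
            IsMinTriOn (realization G Ci) (closedNbhd G Ci) (F Ci)) ∧
          H = cliqueOn Ω ⊔ ⨆ Ci ∈ {D : Set V | IsCompOf G Ω D}, F Ci := by
  constructor
  · intro hH
    obtain ⟨Ω, hΩmax, hbal⟩ := balanced_maxclique hH hW
    refine ⟨Ω, ⟨H, hH, hΩmax⟩, hbal, fun Ci => inducedOn H (closedNbhd G Ci), ?_, ?_⟩
    · intro Ci hCi
      exact minTri_comp_minTriOn hH hΩmax.1 hCi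
    · exact minTri_decomp hH hΩmax.1
  · rintro ⟨Ω, hPMC, hbal, F, hF, rfl⟩
    exact glue_isMinTri hPMC hF

end PaperECC
end

section
/- For every positive integer cc, let G be the graph whose vertices are the nonempty proper subsets of {1,…,cc}, with two distinct subsets adjacent if and only if they intersect. Then (1) the cc sets W_i = {S : i ∈ S}, for 1 ≤ i ≤ cc, form an edge clique cover of G of size cc, and (2) G has no module M with 2 ≤ |M| < |V(G)| = 2^cc − 2. -/
open scoped Classical

namespace PaperECC

variable {V : Type*}

/-- The graph whose vertices are nonempty proper subsets of `{1, …, cc}`,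
two distinct subsets being adjacent iff they intersect. -/
def subsetGraph (cc : ℕ) :
    SimpleGraph {S : Finset (Fin cc) // S.Nonempty ∧ S ≠ Finset.univ} :=
  SimpleGraph.fromRel (fun A B => (A.1 ∩ B.1).Nonempty)


section Aux

lemma adj_iff {cc : ℕ} {A B : {S : Finset (Fin cc) // S.Nonempty ∧ S ≠ Finset.univ}} :
    (subsetGraph cc).Adj A B ↔ A ≠ B ∧ (A.1 ∩ B.1).Nonempty := by
  constructor
  · rintro ⟨hne, h | h⟩
    · exact ⟨hne, h⟩
    · exact ⟨hne, by rwa [Finset.inter_comm]⟩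
  · rintro ⟨hne, h⟩
    exact ⟨hne, Or.inl h⟩

def sing {cc : ℕ} (hcc : 2 ≤ cc) (i : Fin cc) :
    {S : Finset (Fin cc) // S.Nonempty ∧ S ≠ Finset.univ} :=
  ⟨{i}, Finset.singleton_nonempty i, by
    intro h
    have := congrArg Finset.card h
    simp [Finset.card_univ] at this
    omega⟩

lemma sing_mem_module {cc : ℕ} (hcc : 2 ≤ cc)
    {M : Set {S : Finset (Fin cc) // S.Nonempty ∧ S ≠ Finset.univ}}
    (hM : IsModule (subsetGraph cc) M)
    {A B : {S : Finset (Fin cc) // S.Nonempty ∧ S ≠ Finset.univ}}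
    (hA : A ∈ M) (hB : B ∈ M)
    {i : Fin cc} (hiA : i ∈ A.1) (hiB : i ∉ B.1) : sing hcc i ∈ M := by
  by_contra hC
  have hCA : sing hcc i ≠ A := fun h => hC (h ▸ hA)
  have hadjA : (subsetGraph cc).Adj (sing hcc i) A :=
    adj_iff.2 ⟨hCA, ⟨i, Finset.mem_inter.2 ⟨Finset.mem_singleton_self i, hiA⟩⟩⟩
  have hadjB : ¬ (subsetGraph cc).Adj (sing hcc i) B := by
    intro h
    obtain ⟨j, hj⟩ := (adj_iff.1 h).2
    simp only [Finset.mem_inter, sing, Finset.mem_singleton] at hj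
    exact hiB (hj.1 ▸ hj.2)
  rcases hM _ hC with h | h
  · exact hadjB (h B hB)
  · exact h A hA hadjA

def pairV {cc : ℕ} (hcc : 3 ≤ cc) (i k : Fin cc) :
    {S : Finset (Fin cc) // S.Nonempty ∧ S ≠ Finset.univ} :=
  ⟨{i, k}, ⟨i, Finset.mem_insert_self i {k}⟩, by
    intro h
    have := congrArg Finset.card h
    have hle : ({i, k} : Finset (Fin cc)).card ≤ 2 :=
      Finset.card_insert_le i {k} |>.trans (by simp)
    simp [Finset.card_univ] at this
    omega⟩

/-- A module containing two distinct vertices and missing one vertex: contradiction. -/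
lemma module_all {cc : ℕ} (hcc3 : 3 ≤ cc)
    {M : Set {S : Finset (Fin cc) // S.Nonempty ∧ S ≠ Finset.univ}}
    (hM : IsModule (subsetGraph cc) M)
    {A B : {S : Finset (Fin cc) // S.Nonempty ∧ S ≠ Finset.univ}}
    (hA : A ∈ M) (hB : B ∈ M) (hAB : A ≠ B)
    {C : {S : Finset (Fin cc) // S.Nonempty ∧ S ≠ Finset.univ}} (hC : C ∉ M) : False := by
  have hcc2 : 2 ≤ cc := by omega
  obtain ⟨i, j, hij, hi, hj⟩ :
      ∃ i j : Fin cc, i ≠ j ∧ sing hcc2 i ∈ M ∧ sing hcc2 j ∈ M := by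
    have hne : A.1 ≠ B.1 := fun h => hAB (Subtype.ext h)
    have : (∃ i ∈ A.1, i ∉ B.1) ∨ (∃ i ∈ B.1, i ∉ A.1) := by
      by_contra h
      push_neg at h
      exact hne (Finset.Subset.antisymm (fun x hx => h.1 x hx) (fun x hx => h.2 x hx))
    rcases this with ⟨i, hiA, hiB⟩ | ⟨i, hiB, hiA⟩
    · have hsi := sing_mem_module hcc2 hM hA hB hiA hiB
      obtain ⟨j, hjB⟩ := B.2.1
      have hji : j ≠ i := fun h => hiB (h ▸ hjB)
      have hjsi : j ∉ (sing hcc2 i).1 := by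
        simpa [sing] using hji
      exact ⟨i, j, hji.symm, hsi, sing_mem_module hcc2 hM hB hsi hjB hjsi⟩
    · have hsi := sing_mem_module hcc2 hM hB hA hiB hiA
      obtain ⟨j, hjA⟩ := A.2.1
      have hji : j ≠ i := fun h => hiA (h ▸ hjA)
      have hjsi : j ∉ (sing hcc2 i).1 := by
        simpa [sing] using hji
      exact ⟨i, j, hji.symm, hsi, sing_mem_module hcc2 hM hA hsi hjA hjsi⟩
  have hCsing : ∀ l : Fin cc, sing hcc2 l ∈ M →
      ((subsetGraph cc).Adj C (sing hcc2 l) ↔ l ∈ C.1) := by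
    intro l hl
    constructor
    · intro h
      obtain ⟨m, hm⟩ := (adj_iff.1 h).2
      simp only [Finset.mem_inter, sing, Finset.mem_singleton] at hm
      exact hm.2 ▸ hm.1
    · intro h
      refine adj_iff.2 ⟨fun he => hC (he ▸ hl), ⟨l, Finset.mem_inter.2 ⟨h, ?_⟩⟩⟩
      simp [sing]
  have hiffC : (i ∈ C.1) ↔ (j ∈ C.1) := by
    rcases hM C hC with h | h
    · exact ⟨fun _ => (hCsing j hj).1 (h _ hj), fun _ => (hCsing i hi).1 (h _ hi)⟩
    · constructor
      · intro hiC; exact absurd ((hCsing i hi).2 hiC) (h _ hi)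
      · intro hjC; exact absurd ((hCsing j hj).2 hjC) (h _ hj)
  by_cases hiC : i ∈ C.1
  · obtain ⟨k, hk⟩ : ∃ k, k ∉ C.1 := by
      by_contra h
      push_neg at h
      exact C.2.2 (Finset.eq_univ_iff_forall.2 h)
    have hki : k ≠ i := fun h => hk (h ▸ hiC)
    have hkj : k ≠ j := fun h => hk (h ▸ (hiffC.1 hiC))
    have hpair : pairV hcc3 i k ∈ M := by
      by_contra hp
      rcases hM _ hp with h | h
      · have := adj_iff.1 (h _ hj)
        obtain ⟨m, hm⟩ := this.2
        simp only [Finset.mem_inter, pairV, Finset.mem_insert, Finset.mem_singleton,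
          sing] at hm
        rcases hm.1 with rfl | rfl
        · exact hij hm.2
        · exact hkj hm.2
      · refine h _ hi (adj_iff.2 ⟨?_, ⟨i, ?_⟩⟩)
        · intro he
          have := congrArg
            (fun X : {S : Finset (Fin cc) // S.Nonempty ∧ S ≠ Finset.univ} => k ∈ X.1) he
          simp [pairV, sing, hki] at this
        · simp [pairV, sing]
    have hsk : sing hcc2 k ∈ M := by
      refine sing_mem_module hcc2 hM hpair hj ?_ ?_
      · simp [pairV]
      · simp [sing, hkj]
    rcases hM C hC with h | h
    · exact hk ((hCsing k hsk).1 (h _ hsk))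
    · exact h _ hi ((hCsing i hi).2 hiC)
  · obtain ⟨k, hk⟩ := C.2.1
    have hki : k ≠ i := fun h => hiC (h ▸ hk)
    have hkj : k ≠ j := fun h => (hiffC.not.1 hiC) (h ▸ hk)
    have hpair : pairV hcc3 i k ∈ M := by
      by_contra hp
      rcases hM _ hp with h | h
      · have := adj_iff.1 (h _ hj)
        obtain ⟨m, hm⟩ := this.2
        simp only [Finset.mem_inter, pairV, Finset.mem_insert, Finset.mem_singleton,
          sing] at hm
        rcases hm.1 with rfl | rfl
        · exact hij hm.2
        · exact hkj hm.2
      · refine h _ hi (adj_iff.2 ⟨?_, ⟨i, ?_⟩⟩)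
        · intro he
          have := congrArg
            (fun X : {S : Finset (Fin cc) // S.Nonempty ∧ S ≠ Finset.univ} => k ∈ X.1) he
          simp [pairV, sing, hki] at this
        · simp [pairV, sing]
    have hsk : sing hcc2 k ∈ M := by
      refine sing_mem_module hcc2 hM hpair hj ?_ ?_
      · simp [pairV]
      · simp [sing, hkj]
    rcases hM C hC with h | h
    · exact hiC ((hCsing i hi).1 (h _ hi))
    · exact h _ hsk ((hCsing k hsk).2 hk)

lemma card_vtx (cc : ℕ) (hcc : 1 ≤ cc) :
    Fintype.card {S : Finset (Fin cc) // S.Nonempty ∧ S ≠ Finset.univ} = 2 ^ cc - 2 := by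
  rw [Fintype.card_subtype]
  have h1 : (Finset.univ.filter fun S : Finset (Fin cc) => S.Nonempty ∧ S ≠ Finset.univ)
      = Finset.univ \ {∅, Finset.univ} := by
    ext S
    simp [Finset.nonempty_iff_ne_empty, and_comm]
  rw [h1, Finset.card_sdiff_of_subset (by simp)]
  have h2 : ({∅, Finset.univ} : Finset (Finset (Fin cc))).card = 2 := by
    rw [Finset.card_pair]
    intro h
    have : (0:ℕ) = cc := by simpa [Finset.card_univ] using congrArg Finset.card h
    omega
  rw [h2, Finset.card_univ, Fintype.card_finset, Fintype.card_fin]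

end Aux

/-- The sets `Wᵢ = {S : i ∈ S}` form an edge clique cover of size `cc` of
the graph of nonempty proper subsets of `{1, …, cc}` (adjacent iff intersecting), this graph
has `2 ^ cc - 2` vertices, and it has no module `M` with `2 ≤ |M| < 2 ^ cc - 2`. -/
theorem subset_graph_no_module (cc : ℕ) (hcc : 1 ≤ cc) :
    IsECC (subsetGraph cc)
      (Finset.image
        (fun i : Fin cc =>
          ({A : {S : Finset (Fin cc) // S.Nonempty ∧ S ≠ Finset.univ} | i ∈ A.1} : Set _))
        Finset.univ) ∧
    (Finset.image
        (fun i : Fin cc =>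
          ({A : {S : Finset (Fin cc) // S.Nonempty ∧ S ≠ Finset.univ} | i ∈ A.1} : Set _))
        Finset.univ).card = cc ∧
    Fintype.card {S : Finset (Fin cc) // S.Nonempty ∧ S ≠ Finset.univ} = 2 ^ cc - 2 ∧
    ∀ M : Set {S : Finset (Fin cc) // S.Nonempty ∧ S ≠ Finset.univ},
      IsModule (subsetGraph cc) M →
      ¬(2 ≤ M.ncard ∧ M.ncard < 2 ^ cc - 2) := by
  refine ⟨?_, ?_, card_vtx cc hcc, ?_⟩
  · constructor
    · intro K hK
      obtain ⟨i, _, rfl⟩ := Finset.mem_image.1 hK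
      intro A hA B hB hne
      exact adj_iff.2 ⟨hne, ⟨i, Finset.mem_inter.2 ⟨hA, hB⟩⟩⟩
    · intro A B hadj
      obtain ⟨i, hi⟩ := (adj_iff.1 hadj).2
      rw [Finset.mem_inter] at hi
      exact ⟨_, Finset.mem_image.2 ⟨i, Finset.mem_univ i, rfl⟩, hi.1, hi.2⟩
  · rcases eq_or_lt_of_le hcc with h1 | h2
    · subst h1
      rw [show (Finset.univ : Finset (Fin 1)) = {0} by decide, Finset.image_singleton]
      rfl
    · rw [Finset.card_image_of_injective _ ?_, Finset.card_univ, Fintype.card_fin]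
      intro i j hij
      by_contra hne
      have hA : ({i} : Finset (Fin cc)).Nonempty ∧ ({i} : Finset (Fin cc)) ≠ Finset.univ := by
        refine ⟨Finset.singleton_nonempty i, fun h => ?_⟩
        have := congrArg Finset.card h
        simp [Finset.card_univ] at this
        omega
      have hm : (⟨{i}, hA⟩ : {S : Finset (Fin cc) // S.Nonempty ∧ S ≠ Finset.univ}) ∈
          {A : {S : Finset (Fin cc) // S.Nonempty ∧ S ≠ Finset.univ} | i ∈ A.1} := by
        simp
      simp only at hij
      rw [hij] at hm
      simp only [Set.mem_setOf_eq, Finset.mem_singleton] at hm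
      exact hne hm.symm
  · rintro M hM ⟨h2, hlt⟩
    have hcc3 : 3 ≤ cc := by
      by_contra h
      have hle : cc ≤ 2 := by omega
      have : 2 ^ cc ≤ 2 ^ 2 := Nat.pow_le_pow_right (by norm_num) hle
      omega
    have hfin : M.Finite := Set.toFinite M
    obtain ⟨A, hA, B, hB, hAB⟩ := (Set.one_lt_ncard hfin).1 (by omega)
    obtain ⟨C, hC⟩ : ∃ C, C ∉ M := by
      by_contra h
      push_neg at h
      have : M = Set.univ := Set.eq_univ_iff_forall.2 h
      rw [this, Set.ncard_univ, Nat.card_eq_fintype_card, card_vtx cc hcc] at hlt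
      omega
    exact module_all hcc3 hM hA hB hAB hC


end PaperECC
end
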